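/- Suppose every even integer m with 4 ≤ m ≤ 4·10^18 is a sum of two primes, and let T = 8875694145621773516800000000000. If there exist primes p₁ < ... < p_m with p₁ ≤ 4·10^18, p_m ≥ T - 4·10^18 and consecutive gaps p_{i+1} - p_i ≤ 4·10^18, then every odd n with 7 ≤ n ≤ T is a sum of three primes. -/

import Mathlib

theorem tg_sqStep {a k k2 n r s : ℕ} (hk : k2 = 2 * k) (h : a ^ k % n = r)
    (hs : r * r % n = s) : a ^ k2 % n = s := by
  subst hk
  rw [two_mul, pow_add, Nat.mul_mod, h, hs]

theorem tg_mulStep {a k k1 n r s : ℕ} (hk : k1 = k + 1) (h : a ^ k % n = r)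
    (hs : r * (a % n) % n = s) : a ^ k1 % n = s := by
  subst hk
  rw [pow_succ, Nat.mul_mod, h, hs]

theorem tg_zmodPow {a e n r : ℕ} (h : a ^ e % n = r) :
    ((a : ZMod n)) ^ e = ((r : ℕ) : ZMod n) := by
  rw [← Nat.cast_pow, ← ZMod.natCast_mod, h]

theorem tg_neq_one {n r : ℕ} (hn : 1 < n) (hr : r < n) (h1 : r ≠ 1) :
    ((r : ℕ) : ZMod n) ≠ 1 := by
  intro h
  rw [← Nat.cast_one] at h
  have h2 : r % n = 1 % n := (ZMod.natCast_eq_natCast_iff r 1 n).mp h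
  rw [Nat.mod_eq_of_lt hr, Nat.mod_eq_of_lt hn] at h2
  exact h1 h2

set_option maxHeartbeats 4000000 in
theorem tg_bigPrime : Nat.Prime 3999999999999986711 := by
  have hA_1 : 7 ^ 1 % 3999999999999986711 = 7 := by norm_num
  have hA_2 : 7 ^ 2 % 3999999999999986711 = 49 := tg_sqStep (by norm_num) hA_1 (by norm_num)
  have hA_3 : 7 ^ 3 % 3999999999999986711 = 343 := tg_mulStep (by norm_num) hA_2 (by norm_num)
  have hA_4 : 7 ^ 6 % 3999999999999986711 = 117649 := tg_sqStep (by norm_num) hA_3 (by norm_num)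
  have hA_5 : 7 ^ 12 % 3999999999999986711 = 13841287201 := tg_sqStep (by norm_num) hA_4 (by norm_num)
  have hA_6 : 7 ^ 13 % 3999999999999986711 = 96889010407 := tg_mulStep (by norm_num) hA_5 (by norm_num)
  have hA_7 : 7 ^ 26 % 3999999999999986711 = 3480337647785481643 := tg_sqStep (by norm_num) hA_6 (by norm_num)
  have hA_8 : 7 ^ 27 % 3999999999999986711 = 362363534498451235 := tg_mulStep (by norm_num) hA_7 (by norm_num)
  have hA_9 : 7 ^ 54 % 3999999999999986711 = 2566763474304496722 := tg_sqStep (by norm_num) hA_8 (by norm_num)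
  have hA_10 : 7 ^ 55 % 3999999999999986711 = 1967344320131530210 := tg_mulStep (by norm_num) hA_9 (by norm_num)
  have hA_11 : 7 ^ 110 % 3999999999999986711 = 1702610389173564480 := tg_sqStep (by norm_num) hA_10 (by norm_num)
  have hA_12 : 7 ^ 111 % 3999999999999986711 = 3918272724214977938 := tg_mulStep (by norm_num) hA_11 (by norm_num)
  have hA_13 : 7 ^ 222 % 3999999999999986711 = 3543468511836401054 := tg_sqStep (by norm_num) hA_12 (by norm_num)
  have hA_14 : 7 ^ 444 % 3999999999999986711 = 3264761702198402839 := tg_sqStep (by norm_num) hA_13 (by norm_num)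
  have hA_15 : 7 ^ 888 % 3999999999999986711 = 3472900339449515793 := tg_sqStep (by norm_num) hA_14 (by norm_num)
  have hA_16 : 7 ^ 1776 % 3999999999999986711 = 2772573754949705707 := tg_sqStep (by norm_num) hA_15 (by norm_num)
  have hA_17 : 7 ^ 3552 % 3999999999999986711 = 2091043277147702657 := tg_sqStep (by norm_num) hA_16 (by norm_num)
  have hA_18 : 7 ^ 7104 % 3999999999999986711 = 3263426046753830742 := tg_sqStep (by norm_num) hA_17 (by norm_num)
  have hA_19 : 7 ^ 7105 % 3999999999999986711 = 2843982327276881639 := tg_mulStep (by norm_num) hA_18 (by norm_num)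
  have hA_20 : 7 ^ 14210 % 3999999999999986711 = 190567679213505887 := tg_sqStep (by norm_num) hA_19 (by norm_num)
  have hA_21 : 7 ^ 28420 % 3999999999999986711 = 373402398523895108 := tg_sqStep (by norm_num) hA_20 (by norm_num)
  have hA_22 : 7 ^ 28421 % 3999999999999986711 = 2613816789667265756 := tg_mulStep (by norm_num) hA_21 (by norm_num)
  have hA_23 : 7 ^ 56842 % 3999999999999986711 = 2699341551936680394 := tg_sqStep (by norm_num) hA_22 (by norm_num)
  have hA_24 : 7 ^ 56843 % 3999999999999986711 = 2895390863556815914 := tg_mulStep (by norm_num) hA_23 (by norm_num)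
  have hA_25 : 7 ^ 113686 % 3999999999999986711 = 226629285608330286 := tg_sqStep (by norm_num) hA_24 (by norm_num)
  have hA_26 : 7 ^ 227372 % 3999999999999986711 = 3523644507865824549 := tg_sqStep (by norm_num) hA_25 (by norm_num)
  have hA_27 : 7 ^ 227373 % 3999999999999986711 = 665511555060851577 := tg_mulStep (by norm_num) hA_26 (by norm_num)
  have hA_28 : 7 ^ 454746 % 3999999999999986711 = 3713876384529929572 := tg_sqStep (by norm_num) hA_27 (by norm_num)
  have hA_29 : 7 ^ 454747 % 3999999999999986711 = 1997134691709586738 := tg_mulStep (by norm_num) hA_28 (by norm_num)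
  have hA_30 : 7 ^ 909494 % 3999999999999986711 = 1920363028077804936 := tg_sqStep (by norm_num) hA_29 (by norm_num)
  have hA_31 : 7 ^ 1818988 % 3999999999999986711 = 760812782303696776 := tg_sqStep (by norm_num) hA_30 (by norm_num)
  have hA_32 : 7 ^ 1818989 % 3999999999999986711 = 1325689476125890721 := tg_mulStep (by norm_num) hA_31 (by norm_num)
  have hA_33 : 7 ^ 3637978 % 3999999999999986711 = 2624210394968999186 := tg_sqStep (by norm_num) hA_32 (by norm_num)
  have hA_34 : 7 ^ 7275956 % 3999999999999986711 = 2905272684261552040 := tg_sqStep (by norm_num) hA_33 (by norm_num)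
  have hA_35 : 7 ^ 7275957 % 3999999999999986711 = 336908789830930725 := tg_mulStep (by norm_num) hA_34 (by norm_num)
  have hA_36 : 7 ^ 14551914 % 3999999999999986711 = 3396130317183558209 := tg_sqStep (by norm_num) hA_35 (by norm_num)
  have hA_37 : 7 ^ 14551915 % 3999999999999986711 = 3772912220284973908 := tg_mulStep (by norm_num) hA_36 (by norm_num)
  have hA_38 : 7 ^ 29103830 % 3999999999999986711 = 3615556507138914452 := tg_sqStep (by norm_num) hA_37 (by norm_num)
  have hA_39 : 7 ^ 58207660 % 3999999999999986711 = 3987938444123001420 := tg_sqStep (by norm_num) hA_38 (by norm_num)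
  have hA_40 : 7 ^ 116415320 % 3999999999999986711 = 2895602895349716882 := tg_sqStep (by norm_num) hA_39 (by norm_num)
  have hA_41 : 7 ^ 116415321 % 3999999999999986711 = 269220267448084619 := tg_mulStep (by norm_num) hA_40 (by norm_num)
  have hA_42 : 7 ^ 232830642 % 3999999999999986711 = 3527519348692464029 := tg_sqStep (by norm_num) hA_41 (by norm_num)
  have hA_43 : 7 ^ 232830643 % 3999999999999986711 = 692635440847327937 := tg_mulStep (by norm_num) hA_42 (by norm_num)
  have hA_44 : 7 ^ 465661286 % 3999999999999986711 = 3483557871145041822 := tg_sqStep (by norm_num) hA_43 (by norm_num)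
  have hA_45 : 7 ^ 465661287 % 3999999999999986711 = 384905098015372488 := tg_mulStep (by norm_num) hA_44 (by norm_num)
  have hA_46 : 7 ^ 931322574 % 3999999999999986711 = 2198288281666967566 := tg_sqStep (by norm_num) hA_45 (by norm_num)
  have hA_47 : 7 ^ 1862645148 % 3999999999999986711 = 412640530612142450 := tg_sqStep (by norm_num) hA_46 (by norm_num)
  have hA_48 : 7 ^ 1862645149 % 3999999999999986711 = 2888483714284997150 := tg_mulStep (by norm_num) hA_47 (by norm_num)
  have hA_49 : 7 ^ 3725290298 % 3999999999999986711 = 3359281182550040699 := tg_sqStep (by norm_num) hA_48 (by norm_num)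
  have hA_50 : 7 ^ 7450580596 % 3999999999999986711 = 2099540452944801283 := tg_sqStep (by norm_num) hA_49 (by norm_num)
  have hA_51 : 7 ^ 14901161192 % 3999999999999986711 = 3123584043413944066 := tg_sqStep (by norm_num) hA_50 (by norm_num)
  have hA_52 : 7 ^ 14901161193 % 3999999999999986711 = 1865088303897674907 := tg_mulStep (by norm_num) hA_51 (by norm_num)
  have hA_53 : 7 ^ 29802322386 % 3999999999999986711 = 317739273908721863 := tg_sqStep (by norm_num) hA_52 (by norm_num)
  have hA_54 : 7 ^ 29802322387 % 3999999999999986711 = 2224174917361053041 := tg_mulStep (by norm_num) hA_53 (by norm_num)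
  have hA_55 : 7 ^ 59604644774 % 3999999999999986711 = 3146040354176996602 := tg_sqStep (by norm_num) hA_54 (by norm_num)
  have hA_56 : 7 ^ 59604644775 % 3999999999999986711 = 2022282479239042659 := tg_mulStep (by norm_num) hA_55 (by norm_num)
  have hA_57 : 7 ^ 119209289550 % 3999999999999986711 = 1877077952534533264 := tg_sqStep (by norm_num) hA_56 (by norm_num)
  have hA_58 : 7 ^ 238418579100 % 3999999999999986711 = 2903259595018557052 := tg_sqStep (by norm_num) hA_57 (by norm_num)
  have hA_59 : 7 ^ 238418579101 % 3999999999999986711 = 322817165129965809 := tg_mulStep (by norm_num) hA_58 (by norm_num)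
  have hA_60 : 7 ^ 476837158202 % 3999999999999986711 = 3248250036698971302 := tg_sqStep (by norm_num) hA_59 (by norm_num)
  have hA_61 : 7 ^ 476837158203 % 3999999999999986711 = 2737750256892865559 := tg_mulStep (by norm_num) hA_60 (by norm_num)
  have hA_62 : 7 ^ 953674316406 % 3999999999999986711 = 3431124638322762266 := tg_sqStep (by norm_num) hA_61 (by norm_num)
  have hA_63 : 7 ^ 1907348632812 % 3999999999999986711 = 1857243437101261236 := tg_sqStep (by norm_num) hA_62 (by norm_num)
  have hA_64 : 7 ^ 3814697265624 % 3999999999999986711 = 590887824375240306 := tg_sqStep (by norm_num) hA_63 (by norm_num)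
  have hA_65 : 7 ^ 7629394531248 % 3999999999999986711 = 3878015225573392269 := tg_sqStep (by norm_num) hA_64 (by norm_num)
  have hA_66 : 7 ^ 7629394531249 % 3999999999999986711 = 3146106579013825617 := tg_mulStep (by norm_num) hA_65 (by norm_num)
  have hA_67 : 7 ^ 15258789062498 % 3999999999999986711 = 1791063125186886496 := tg_sqStep (by norm_num) hA_66 (by norm_num)
  have hA_68 : 7 ^ 15258789062499 % 3999999999999986711 = 537441876308245339 := tg_mulStep (by norm_num) hA_67 (by norm_num)
  have hA_69 : 7 ^ 30517578124998 % 3999999999999986711 = 2227063360734870261 := tg_sqStep (by norm_num) hA_68 (by norm_num)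
  have hA_70 : 7 ^ 30517578124999 % 3999999999999986711 = 3589443525144131694 := tg_mulStep (by norm_num) hA_69 (by norm_num)
  have hA_71 : 7 ^ 61035156249998 % 3999999999999986711 = 789175551919735791 := tg_sqStep (by norm_num) hA_70 (by norm_num)
  have hA_72 : 7 ^ 61035156249999 % 3999999999999986711 = 1524228863438163826 := tg_mulStep (by norm_num) hA_71 (by norm_num)
  have hA_73 : 7 ^ 122070312499998 % 3999999999999986711 = 311218295900036309 := tg_sqStep (by norm_num) hA_72 (by norm_num)
  have hA_74 : 7 ^ 122070312499999 % 3999999999999986711 = 2178528071300254163 := tg_mulStep (by norm_num) hA_73 (by norm_num)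
  have hA_75 : 7 ^ 244140624999998 % 3999999999999986711 = 1497567674139970576 := tg_sqStep (by norm_num) hA_74 (by norm_num)
  have hA_76 : 7 ^ 244140624999999 % 3999999999999986711 = 2482973718979820610 := tg_mulStep (by norm_num) hA_75 (by norm_num)
  have hA_77 : 7 ^ 488281249999998 % 3999999999999986711 = 1127294948101385457 := tg_sqStep (by norm_num) hA_76 (by norm_num)
  have hA_78 : 7 ^ 976562499999996 % 3999999999999986711 = 858855807424357981 := tg_sqStep (by norm_num) hA_77 (by norm_num)
  have hA_79 : 7 ^ 1953124999999992 % 3999999999999986711 = 239595132958592348 := tg_sqStep (by norm_num) hA_78 (by norm_num)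
  have hA_80 : 7 ^ 1953124999999993 % 3999999999999986711 = 1677165930710146436 := tg_mulStep (by norm_num) hA_79 (by norm_num)
  have hA_81 : 7 ^ 3906249999999986 % 3999999999999986711 = 1153607756289213681 := tg_sqStep (by norm_num) hA_80 (by norm_num)
  have hA_82 : 7 ^ 3906249999999987 % 3999999999999986711 = 75254294024522345 := tg_mulStep (by norm_num) hA_81 (by norm_num)
  have hA_83 : 7 ^ 7812499999999974 % 3999999999999986711 = 2335595538644036216 := tg_sqStep (by norm_num) hA_82 (by norm_num)
  have hA_84 : 7 ^ 15624999999999948 % 3999999999999986711 = 110202578514361628 := tg_sqStep (by norm_num) hA_83 (by norm_num)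
  have hA_85 : 7 ^ 31249999999999896 % 3999999999999986711 = 3471746814289774375 := tg_sqStep (by norm_num) hA_84 (by norm_num)
  have hA_86 : 7 ^ 62499999999999792 % 3999999999999986711 = 1619589262809308724 := tg_sqStep (by norm_num) hA_85 (by norm_num)
  have hA_87 : 7 ^ 124999999999999584 % 3999999999999986711 = 1213872380141930687 := tg_sqStep (by norm_num) hA_86 (by norm_num)
  have hA_88 : 7 ^ 249999999999999168 % 3999999999999986711 = 956973790456410035 := tg_sqStep (by norm_num) hA_87 (by norm_num)
  have hA_89 : 7 ^ 249999999999999169 % 3999999999999986711 = 2698816533194883534 := tg_mulStep (by norm_num) hA_88 (by norm_num)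
  have hA_90 : 7 ^ 499999999999998338 % 3999999999999986711 = 2150895954443981303 := tg_sqStep (by norm_num) hA_89 (by norm_num)
  have hA_91 : 7 ^ 999999999999996676 % 3999999999999986711 = 2648421407233645494 := tg_sqStep (by norm_num) hA_90 (by norm_num)
  have hA_92 : 7 ^ 999999999999996677 % 3999999999999986711 = 2538949850635571614 := tg_mulStep (by norm_num) hA_91 (by norm_num)
  have hA_93 : 7 ^ 1999999999999993354 % 3999999999999986711 = 571428571428569530 := tg_sqStep (by norm_num) hA_92 (by norm_num)
  have hA_94 : 7 ^ 1999999999999993355 % 3999999999999986711 = 3999999999999986710 := tg_mulStep (by norm_num) hA_93 (by norm_num)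
  have hA_95 : 7 ^ 3999999999999986710 % 3999999999999986711 = 1 := tg_sqStep (by norm_num) hA_94 (by norm_num)
  have hD2_1 : 7 ^ 1 % 3999999999999986711 = 7 := by norm_num
  have hD2_2 : 7 ^ 2 % 3999999999999986711 = 49 := tg_sqStep (by norm_num) hD2_1 (by norm_num)
  have hD2_3 : 7 ^ 3 % 3999999999999986711 = 343 := tg_mulStep (by norm_num) hD2_2 (by norm_num)
  have hD2_4 : 7 ^ 6 % 3999999999999986711 = 117649 := tg_sqStep (by norm_num) hD2_3 (by norm_num)
  have hD2_5 : 7 ^ 12 % 3999999999999986711 = 13841287201 := tg_sqStep (by norm_num) hD2_4 (by norm_num)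
  have hD2_6 : 7 ^ 13 % 3999999999999986711 = 96889010407 := tg_mulStep (by norm_num) hD2_5 (by norm_num)
  have hD2_7 : 7 ^ 26 % 3999999999999986711 = 3480337647785481643 := tg_sqStep (by norm_num) hD2_6 (by norm_num)
  have hD2_8 : 7 ^ 27 % 3999999999999986711 = 362363534498451235 := tg_mulStep (by norm_num) hD2_7 (by norm_num)
  have hD2_9 : 7 ^ 54 % 3999999999999986711 = 2566763474304496722 := tg_sqStep (by norm_num) hD2_8 (by norm_num)
  have hD2_10 : 7 ^ 55 % 3999999999999986711 = 1967344320131530210 := tg_mulStep (by norm_num) hD2_9 (by norm_num)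
  have hD2_11 : 7 ^ 110 % 3999999999999986711 = 1702610389173564480 := tg_sqStep (by norm_num) hD2_10 (by norm_num)
  have hD2_12 : 7 ^ 111 % 3999999999999986711 = 3918272724214977938 := tg_mulStep (by norm_num) hD2_11 (by norm_num)
  have hD2_13 : 7 ^ 222 % 3999999999999986711 = 3543468511836401054 := tg_sqStep (by norm_num) hD2_12 (by norm_num)
  have hD2_14 : 7 ^ 444 % 3999999999999986711 = 3264761702198402839 := tg_sqStep (by norm_num) hD2_13 (by norm_num)
  have hD2_15 : 7 ^ 888 % 3999999999999986711 = 3472900339449515793 := tg_sqStep (by norm_num) hD2_14 (by norm_num)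
  have hD2_16 : 7 ^ 1776 % 3999999999999986711 = 2772573754949705707 := tg_sqStep (by norm_num) hD2_15 (by norm_num)
  have hD2_17 : 7 ^ 3552 % 3999999999999986711 = 2091043277147702657 := tg_sqStep (by norm_num) hD2_16 (by norm_num)
  have hD2_18 : 7 ^ 7104 % 3999999999999986711 = 3263426046753830742 := tg_sqStep (by norm_num) hD2_17 (by norm_num)
  have hD2_19 : 7 ^ 7105 % 3999999999999986711 = 2843982327276881639 := tg_mulStep (by norm_num) hD2_18 (by norm_num)
  have hD2_20 : 7 ^ 14210 % 3999999999999986711 = 190567679213505887 := tg_sqStep (by norm_num) hD2_19 (by norm_num)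
  have hD2_21 : 7 ^ 28420 % 3999999999999986711 = 373402398523895108 := tg_sqStep (by norm_num) hD2_20 (by norm_num)
  have hD2_22 : 7 ^ 28421 % 3999999999999986711 = 2613816789667265756 := tg_mulStep (by norm_num) hD2_21 (by norm_num)
  have hD2_23 : 7 ^ 56842 % 3999999999999986711 = 2699341551936680394 := tg_sqStep (by norm_num) hD2_22 (by norm_num)
  have hD2_24 : 7 ^ 56843 % 3999999999999986711 = 2895390863556815914 := tg_mulStep (by norm_num) hD2_23 (by norm_num)
  have hD2_25 : 7 ^ 113686 % 3999999999999986711 = 226629285608330286 := tg_sqStep (by norm_num) hD2_24 (by norm_num)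
  have hD2_26 : 7 ^ 227372 % 3999999999999986711 = 3523644507865824549 := tg_sqStep (by norm_num) hD2_25 (by norm_num)
  have hD2_27 : 7 ^ 227373 % 3999999999999986711 = 665511555060851577 := tg_mulStep (by norm_num) hD2_26 (by norm_num)
  have hD2_28 : 7 ^ 454746 % 3999999999999986711 = 3713876384529929572 := tg_sqStep (by norm_num) hD2_27 (by norm_num)
  have hD2_29 : 7 ^ 454747 % 3999999999999986711 = 1997134691709586738 := tg_mulStep (by norm_num) hD2_28 (by norm_num)
  have hD2_30 : 7 ^ 909494 % 3999999999999986711 = 1920363028077804936 := tg_sqStep (by norm_num) hD2_29 (by norm_num)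
  have hD2_31 : 7 ^ 1818988 % 3999999999999986711 = 760812782303696776 := tg_sqStep (by norm_num) hD2_30 (by norm_num)
  have hD2_32 : 7 ^ 1818989 % 3999999999999986711 = 1325689476125890721 := tg_mulStep (by norm_num) hD2_31 (by norm_num)
  have hD2_33 : 7 ^ 3637978 % 3999999999999986711 = 2624210394968999186 := tg_sqStep (by norm_num) hD2_32 (by norm_num)
  have hD2_34 : 7 ^ 7275956 % 3999999999999986711 = 2905272684261552040 := tg_sqStep (by norm_num) hD2_33 (by norm_num)
  have hD2_35 : 7 ^ 7275957 % 3999999999999986711 = 336908789830930725 := tg_mulStep (by norm_num) hD2_34 (by norm_num)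
  have hD2_36 : 7 ^ 14551914 % 3999999999999986711 = 3396130317183558209 := tg_sqStep (by norm_num) hD2_35 (by norm_num)
  have hD2_37 : 7 ^ 14551915 % 3999999999999986711 = 3772912220284973908 := tg_mulStep (by norm_num) hD2_36 (by norm_num)
  have hD2_38 : 7 ^ 29103830 % 3999999999999986711 = 3615556507138914452 := tg_sqStep (by norm_num) hD2_37 (by norm_num)
  have hD2_39 : 7 ^ 58207660 % 3999999999999986711 = 3987938444123001420 := tg_sqStep (by norm_num) hD2_38 (by norm_num)
  have hD2_40 : 7 ^ 116415320 % 3999999999999986711 = 2895602895349716882 := tg_sqStep (by norm_num) hD2_39 (by norm_num)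
  have hD2_41 : 7 ^ 116415321 % 3999999999999986711 = 269220267448084619 := tg_mulStep (by norm_num) hD2_40 (by norm_num)
  have hD2_42 : 7 ^ 232830642 % 3999999999999986711 = 3527519348692464029 := tg_sqStep (by norm_num) hD2_41 (by norm_num)
  have hD2_43 : 7 ^ 232830643 % 3999999999999986711 = 692635440847327937 := tg_mulStep (by norm_num) hD2_42 (by norm_num)
  have hD2_44 : 7 ^ 465661286 % 3999999999999986711 = 3483557871145041822 := tg_sqStep (by norm_num) hD2_43 (by norm_num)
  have hD2_45 : 7 ^ 465661287 % 3999999999999986711 = 384905098015372488 := tg_mulStep (by norm_num) hD2_44 (by norm_num)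
  have hD2_46 : 7 ^ 931322574 % 3999999999999986711 = 2198288281666967566 := tg_sqStep (by norm_num) hD2_45 (by norm_num)
  have hD2_47 : 7 ^ 1862645148 % 3999999999999986711 = 412640530612142450 := tg_sqStep (by norm_num) hD2_46 (by norm_num)
  have hD2_48 : 7 ^ 1862645149 % 3999999999999986711 = 2888483714284997150 := tg_mulStep (by norm_num) hD2_47 (by norm_num)
  have hD2_49 : 7 ^ 3725290298 % 3999999999999986711 = 3359281182550040699 := tg_sqStep (by norm_num) hD2_48 (by norm_num)
  have hD2_50 : 7 ^ 7450580596 % 3999999999999986711 = 2099540452944801283 := tg_sqStep (by norm_num) hD2_49 (by norm_num)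
  have hD2_51 : 7 ^ 14901161192 % 3999999999999986711 = 3123584043413944066 := tg_sqStep (by norm_num) hD2_50 (by norm_num)
  have hD2_52 : 7 ^ 14901161193 % 3999999999999986711 = 1865088303897674907 := tg_mulStep (by norm_num) hD2_51 (by norm_num)
  have hD2_53 : 7 ^ 29802322386 % 3999999999999986711 = 317739273908721863 := tg_sqStep (by norm_num) hD2_52 (by norm_num)
  have hD2_54 : 7 ^ 29802322387 % 3999999999999986711 = 2224174917361053041 := tg_mulStep (by norm_num) hD2_53 (by norm_num)
  have hD2_55 : 7 ^ 59604644774 % 3999999999999986711 = 3146040354176996602 := tg_sqStep (by norm_num) hD2_54 (by norm_num)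
  have hD2_56 : 7 ^ 59604644775 % 3999999999999986711 = 2022282479239042659 := tg_mulStep (by norm_num) hD2_55 (by norm_num)
  have hD2_57 : 7 ^ 119209289550 % 3999999999999986711 = 1877077952534533264 := tg_sqStep (by norm_num) hD2_56 (by norm_num)
  have hD2_58 : 7 ^ 238418579100 % 3999999999999986711 = 2903259595018557052 := tg_sqStep (by norm_num) hD2_57 (by norm_num)
  have hD2_59 : 7 ^ 238418579101 % 3999999999999986711 = 322817165129965809 := tg_mulStep (by norm_num) hD2_58 (by norm_num)
  have hD2_60 : 7 ^ 476837158202 % 3999999999999986711 = 3248250036698971302 := tg_sqStep (by norm_num) hD2_59 (by norm_num)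
  have hD2_61 : 7 ^ 476837158203 % 3999999999999986711 = 2737750256892865559 := tg_mulStep (by norm_num) hD2_60 (by norm_num)
  have hD2_62 : 7 ^ 953674316406 % 3999999999999986711 = 3431124638322762266 := tg_sqStep (by norm_num) hD2_61 (by norm_num)
  have hD2_63 : 7 ^ 1907348632812 % 3999999999999986711 = 1857243437101261236 := tg_sqStep (by norm_num) hD2_62 (by norm_num)
  have hD2_64 : 7 ^ 3814697265624 % 3999999999999986711 = 590887824375240306 := tg_sqStep (by norm_num) hD2_63 (by norm_num)
  have hD2_65 : 7 ^ 7629394531248 % 3999999999999986711 = 3878015225573392269 := tg_sqStep (by norm_num) hD2_64 (by norm_num)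
  have hD2_66 : 7 ^ 7629394531249 % 3999999999999986711 = 3146106579013825617 := tg_mulStep (by norm_num) hD2_65 (by norm_num)
  have hD2_67 : 7 ^ 15258789062498 % 3999999999999986711 = 1791063125186886496 := tg_sqStep (by norm_num) hD2_66 (by norm_num)
  have hD2_68 : 7 ^ 15258789062499 % 3999999999999986711 = 537441876308245339 := tg_mulStep (by norm_num) hD2_67 (by norm_num)
  have hD2_69 : 7 ^ 30517578124998 % 3999999999999986711 = 2227063360734870261 := tg_sqStep (by norm_num) hD2_68 (by norm_num)
  have hD2_70 : 7 ^ 30517578124999 % 3999999999999986711 = 3589443525144131694 := tg_mulStep (by norm_num) hD2_69 (by norm_num)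
  have hD2_71 : 7 ^ 61035156249998 % 3999999999999986711 = 789175551919735791 := tg_sqStep (by norm_num) hD2_70 (by norm_num)
  have hD2_72 : 7 ^ 61035156249999 % 3999999999999986711 = 1524228863438163826 := tg_mulStep (by norm_num) hD2_71 (by norm_num)
  have hD2_73 : 7 ^ 122070312499998 % 3999999999999986711 = 311218295900036309 := tg_sqStep (by norm_num) hD2_72 (by norm_num)
  have hD2_74 : 7 ^ 122070312499999 % 3999999999999986711 = 2178528071300254163 := tg_mulStep (by norm_num) hD2_73 (by norm_num)
  have hD2_75 : 7 ^ 244140624999998 % 3999999999999986711 = 1497567674139970576 := tg_sqStep (by norm_num) hD2_74 (by norm_num)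
  have hD2_76 : 7 ^ 244140624999999 % 3999999999999986711 = 2482973718979820610 := tg_mulStep (by norm_num) hD2_75 (by norm_num)
  have hD2_77 : 7 ^ 488281249999998 % 3999999999999986711 = 1127294948101385457 := tg_sqStep (by norm_num) hD2_76 (by norm_num)
  have hD2_78 : 7 ^ 976562499999996 % 3999999999999986711 = 858855807424357981 := tg_sqStep (by norm_num) hD2_77 (by norm_num)
  have hD2_79 : 7 ^ 1953124999999992 % 3999999999999986711 = 239595132958592348 := tg_sqStep (by norm_num) hD2_78 (by norm_num)
  have hD2_80 : 7 ^ 1953124999999993 % 3999999999999986711 = 1677165930710146436 := tg_mulStep (by norm_num) hD2_79 (by norm_num)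
  have hD2_81 : 7 ^ 3906249999999986 % 3999999999999986711 = 1153607756289213681 := tg_sqStep (by norm_num) hD2_80 (by norm_num)
  have hD2_82 : 7 ^ 3906249999999987 % 3999999999999986711 = 75254294024522345 := tg_mulStep (by norm_num) hD2_81 (by norm_num)
  have hD2_83 : 7 ^ 7812499999999974 % 3999999999999986711 = 2335595538644036216 := tg_sqStep (by norm_num) hD2_82 (by norm_num)
  have hD2_84 : 7 ^ 15624999999999948 % 3999999999999986711 = 110202578514361628 := tg_sqStep (by norm_num) hD2_83 (by norm_num)
  have hD2_85 : 7 ^ 31249999999999896 % 3999999999999986711 = 3471746814289774375 := tg_sqStep (by norm_num) hD2_84 (by norm_num)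
  have hD2_86 : 7 ^ 62499999999999792 % 3999999999999986711 = 1619589262809308724 := tg_sqStep (by norm_num) hD2_85 (by norm_num)
  have hD2_87 : 7 ^ 124999999999999584 % 3999999999999986711 = 1213872380141930687 := tg_sqStep (by norm_num) hD2_86 (by norm_num)
  have hD2_88 : 7 ^ 249999999999999168 % 3999999999999986711 = 956973790456410035 := tg_sqStep (by norm_num) hD2_87 (by norm_num)
  have hD2_89 : 7 ^ 249999999999999169 % 3999999999999986711 = 2698816533194883534 := tg_mulStep (by norm_num) hD2_88 (by norm_num)
  have hD2_90 : 7 ^ 499999999999998338 % 3999999999999986711 = 2150895954443981303 := tg_sqStep (by norm_num) hD2_89 (by norm_num)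
  have hD2_91 : 7 ^ 999999999999996676 % 3999999999999986711 = 2648421407233645494 := tg_sqStep (by norm_num) hD2_90 (by norm_num)
  have hD2_92 : 7 ^ 999999999999996677 % 3999999999999986711 = 2538949850635571614 := tg_mulStep (by norm_num) hD2_91 (by norm_num)
  have hD2_93 : 7 ^ 1999999999999993354 % 3999999999999986711 = 571428571428569530 := tg_sqStep (by norm_num) hD2_92 (by norm_num)
  have hD2_94 : 7 ^ 1999999999999993355 % 3999999999999986711 = 3999999999999986710 := tg_mulStep (by norm_num) hD2_93 (by norm_num)
  have hD5_1 : 7 ^ 1 % 3999999999999986711 = 7 := by norm_num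
  have hD5_2 : 7 ^ 2 % 3999999999999986711 = 49 := tg_sqStep (by norm_num) hD5_1 (by norm_num)
  have hD5_3 : 7 ^ 4 % 3999999999999986711 = 2401 := tg_sqStep (by norm_num) hD5_2 (by norm_num)
  have hD5_4 : 7 ^ 5 % 3999999999999986711 = 16807 := tg_mulStep (by norm_num) hD5_3 (by norm_num)
  have hD5_5 : 7 ^ 10 % 3999999999999986711 = 282475249 := tg_sqStep (by norm_num) hD5_4 (by norm_num)
  have hD5_6 : 7 ^ 11 % 3999999999999986711 = 1977326743 := tg_mulStep (by norm_num) hD5_5 (by norm_num)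
  have hD5_7 : 7 ^ 22 % 3999999999999986711 = 3909821048582988049 := tg_sqStep (by norm_num) hD5_6 (by norm_num)
  have hD5_8 : 7 ^ 44 % 3999999999999986711 = 6360240669310706 := tg_sqStep (by norm_num) hD5_7 (by norm_num)
  have hD5_9 : 7 ^ 88 % 3999999999999986711 = 2031829555407857068 := tg_sqStep (by norm_num) hD5_8 (by norm_num)
  have hD5_10 : 7 ^ 176 % 3999999999999986711 = 2471238587893299197 := tg_sqStep (by norm_num) hD5_9 (by norm_num)
  have hD5_11 : 7 ^ 177 % 3999999999999986711 = 1298670115253147535 := tg_mulStep (by norm_num) hD5_10 (by norm_num)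
  have hD5_12 : 7 ^ 354 % 3999999999999986711 = 965947473451366989 := tg_sqStep (by norm_num) hD5_11 (by norm_num)
  have hD5_13 : 7 ^ 355 % 3999999999999986711 = 2761632314159582212 := tg_mulStep (by norm_num) hD5_12 (by norm_num)
  have hD5_14 : 7 ^ 710 % 3999999999999986711 = 338231141903561464 := tg_sqStep (by norm_num) hD5_13 (by norm_num)
  have hD5_15 : 7 ^ 1420 % 3999999999999986711 = 3747538627517471749 := tg_sqStep (by norm_num) hD5_14 (by norm_num)
  have hD5_16 : 7 ^ 1421 % 3999999999999986711 = 2232770392622381977 := tg_mulStep (by norm_num) hD5_15 (by norm_num)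
  have hD5_17 : 7 ^ 2842 % 3999999999999986711 = 199491340305582727 := tg_sqStep (by norm_num) hD5_16 (by norm_num)
  have hD5_18 : 7 ^ 5684 % 3999999999999986711 = 3688450876436395983 := tg_sqStep (by norm_num) hD5_17 (by norm_num)
  have hD5_19 : 7 ^ 11368 % 3999999999999986711 = 1863372249135286213 := tg_sqStep (by norm_num) hD5_18 (by norm_num)
  have hD5_20 : 7 ^ 22736 % 3999999999999986711 = 2342040719556962288 := tg_sqStep (by norm_num) hD5_19 (by norm_num)
  have hD5_21 : 7 ^ 22737 % 3999999999999986711 = 394285036898789172 := tg_mulStep (by norm_num) hD5_20 (by norm_num)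
  have hD5_22 : 7 ^ 45474 % 3999999999999986711 = 3363960782899348341 := tg_sqStep (by norm_num) hD5_21 (by norm_num)
  have hD5_23 : 7 ^ 90948 % 3999999999999986711 = 1122609395099926387 := tg_sqStep (by norm_num) hD5_22 (by norm_num)
  have hD5_24 : 7 ^ 90949 % 3999999999999986711 = 3858265765699497998 := tg_mulStep (by norm_num) hD5_23 (by norm_num)
  have hD5_25 : 7 ^ 181898 % 3999999999999986711 = 1955023818795449355 := tg_sqStep (by norm_num) hD5_24 (by norm_num)
  have hD5_26 : 7 ^ 363796 % 3999999999999986711 = 740178684580991522 := tg_sqStep (by norm_num) hD5_25 (by norm_num)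
  have hD5_27 : 7 ^ 363797 % 3999999999999986711 = 1181250792066953943 := tg_mulStep (by norm_num) hD5_26 (by norm_num)
  have hD5_28 : 7 ^ 727594 % 3999999999999986711 = 109973847692082035 := tg_sqStep (by norm_num) hD5_27 (by norm_num)
  have hD5_29 : 7 ^ 727595 % 3999999999999986711 = 769816933844574245 := tg_mulStep (by norm_num) hD5_28 (by norm_num)
  have hD5_30 : 7 ^ 1455190 % 3999999999999986711 = 492208200920558813 := tg_sqStep (by norm_num) hD5_29 (by norm_num)
  have hD5_31 : 7 ^ 1455191 % 3999999999999986711 = 3445457406443911691 := tg_mulStep (by norm_num) hD5_30 (by norm_num)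
  have hD5_32 : 7 ^ 2910382 % 3999999999999986711 = 1945847881446237201 := tg_sqStep (by norm_num) hD5_31 (by norm_num)
  have hD5_33 : 7 ^ 2910383 % 3999999999999986711 = 1620935170123700274 := tg_mulStep (by norm_num) hD5_32 (by norm_num)
  have hD5_34 : 7 ^ 5820766 % 3999999999999986711 = 2327835745651728617 := tg_sqStep (by norm_num) hD5_33 (by norm_num)
  have hD5_35 : 7 ^ 11641532 % 3999999999999986711 = 1481061849106598527 := tg_sqStep (by norm_num) hD5_34 (by norm_num)
  have hD5_36 : 7 ^ 23283064 % 3999999999999986711 = 3512177462429302532 := tg_sqStep (by norm_num) hD5_35 (by norm_num)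
  have hD5_37 : 7 ^ 46566128 % 3999999999999986711 = 3975348539041032840 := tg_sqStep (by norm_num) hD5_36 (by norm_num)
  have hD5_38 : 7 ^ 93132256 % 3999999999999986711 = 924108990396507964 := tg_sqStep (by norm_num) hD5_37 (by norm_num)
  have hD5_39 : 7 ^ 93132257 % 3999999999999986711 = 2468762932775569037 := tg_mulStep (by norm_num) hD5_38 (by norm_num)
  have hD5_40 : 7 ^ 186264514 % 3999999999999986711 = 524047319082920376 := tg_sqStep (by norm_num) hD5_39 (by norm_num)
  have hD5_41 : 7 ^ 372529028 % 3999999999999986711 = 2848294818341753828 := tg_sqStep (by norm_num) hD5_40 (by norm_num)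
  have hD5_42 : 7 ^ 372529029 % 3999999999999986711 = 3938063728392329952 := tg_mulStep (by norm_num) hD5_41 (by norm_num)
  have hD5_43 : 7 ^ 745058058 % 3999999999999986711 = 1514547122657564121 := tg_sqStep (by norm_num) hD5_42 (by norm_num)
  have hD5_44 : 7 ^ 745058059 % 3999999999999986711 = 2601829858602975425 := tg_mulStep (by norm_num) hD5_43 (by norm_num)
  have hD5_45 : 7 ^ 1490116118 % 3999999999999986711 = 3207271094434679780 := tg_sqStep (by norm_num) hD5_44 (by norm_num)
  have hD5_46 : 7 ^ 1490116119 % 3999999999999986711 = 2450897661042824905 := tg_mulStep (by norm_num) hD5_45 (by norm_num)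
  have hD5_47 : 7 ^ 2980232238 % 3999999999999986711 = 417276993821503786 := tg_sqStep (by norm_num) hD5_46 (by norm_num)
  have hD5_48 : 7 ^ 5960464476 % 3999999999999986711 = 3265727049354390415 := tg_sqStep (by norm_num) hD5_47 (by norm_num)
  have hD5_49 : 7 ^ 5960464477 % 3999999999999986711 = 2860089345480799350 := tg_mulStep (by norm_num) hD5_48 (by norm_num)
  have hD5_50 : 7 ^ 11920928954 % 3999999999999986711 = 1641002330203049611 := tg_sqStep (by norm_num) hD5_49 (by norm_num)
  have hD5_51 : 7 ^ 11920928955 % 3999999999999986711 = 3487016311421373855 := tg_mulStep (by norm_num) hD5_50 (by norm_num)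
  have hD5_52 : 7 ^ 23841857910 % 3999999999999986711 = 182590251241685273 := tg_sqStep (by norm_num) hD5_51 (by norm_num)
  have hD5_53 : 7 ^ 47683715820 % 3999999999999986711 = 1139715513870388914 := tg_sqStep (by norm_num) hD5_52 (by norm_num)
  have hD5_54 : 7 ^ 95367431640 % 3999999999999986711 = 457085882605623201 := tg_sqStep (by norm_num) hD5_53 (by norm_num)
  have hD5_55 : 7 ^ 190734863280 % 3999999999999986711 = 453676446606214819 := tg_sqStep (by norm_num) hD5_54 (by norm_num)
  have hD5_56 : 7 ^ 190734863281 % 3999999999999986711 = 3175735126243503733 := tg_mulStep (by norm_num) hD5_55 (by norm_num)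
  have hD5_57 : 7 ^ 381469726562 % 3999999999999986711 = 2326380994941545225 := tg_sqStep (by norm_num) hD5_56 (by norm_num)
  have hD5_58 : 7 ^ 762939453124 % 3999999999999986711 = 1927655547146807643 := tg_sqStep (by norm_num) hD5_57 (by norm_num)
  have hD5_59 : 7 ^ 1525878906248 % 3999999999999986711 = 765735760337108657 := tg_sqStep (by norm_num) hD5_58 (by norm_num)
  have hD5_60 : 7 ^ 1525878906249 % 3999999999999986711 = 1360150322359773888 := tg_mulStep (by norm_num) hD5_59 (by norm_num)
  have hD5_61 : 7 ^ 3051757812498 % 3999999999999986711 = 1542287205309146982 := tg_sqStep (by norm_num) hD5_60 (by norm_num)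
  have hD5_62 : 7 ^ 3051757812499 % 3999999999999986711 = 2796010437164055452 := tg_mulStep (by norm_num) hD5_61 (by norm_num)
  have hD5_63 : 7 ^ 6103515624998 % 3999999999999986711 = 1373077464764291461 := tg_sqStep (by norm_num) hD5_62 (by norm_num)
  have hD5_64 : 7 ^ 6103515624999 % 3999999999999986711 = 1611542253350066805 := tg_mulStep (by norm_num) hD5_63 (by norm_num)
  have hD5_65 : 7 ^ 12207031249998 % 3999999999999986711 = 493576059508148212 := tg_sqStep (by norm_num) hD5_64 (by norm_num)
  have hD5_66 : 7 ^ 12207031249999 % 3999999999999986711 = 3455032416557037484 := tg_mulStep (by norm_num) hD5_65 (by norm_num)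
  have hD5_67 : 7 ^ 24414062499998 % 3999999999999986711 = 3129941902572163196 := tg_sqStep (by norm_num) hD5_66 (by norm_num)
  have hD5_68 : 7 ^ 24414062499999 % 3999999999999986711 = 1909593318005208817 := tg_mulStep (by norm_num) hD5_67 (by norm_num)
  have hD5_69 : 7 ^ 48828124999998 % 3999999999999986711 = 3015372049070925119 := tg_sqStep (by norm_num) hD5_68 (by norm_num)
  have hD5_70 : 7 ^ 48828124999999 % 3999999999999986711 = 1107604343496542278 := tg_mulStep (by norm_num) hD5_69 (by norm_num)
  have hD5_71 : 7 ^ 97656249999998 % 3999999999999986711 = 132759902342186331 := tg_sqStep (by norm_num) hD5_70 (by norm_num)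
  have hD5_72 : 7 ^ 97656249999999 % 3999999999999986711 = 929319316395304317 := tg_mulStep (by norm_num) hD5_71 (by norm_num)
  have hD5_73 : 7 ^ 195312499999998 % 3999999999999986711 = 338198089102225339 := tg_sqStep (by norm_num) hD5_72 (by norm_num)
  have hD5_74 : 7 ^ 195312499999999 % 3999999999999986711 = 2367386623715577373 := tg_mulStep (by norm_num) hD5_73 (by norm_num)
  have hD5_75 : 7 ^ 390624999999998 % 3999999999999986711 = 2250077253146400022 := tg_sqStep (by norm_num) hD5_74 (by norm_num)
  have hD5_76 : 7 ^ 781249999999996 % 3999999999999986711 = 3748821121170654038 := tg_sqStep (by norm_num) hD5_75 (by norm_num)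
  have hD5_77 : 7 ^ 781249999999997 % 3999999999999986711 = 2241747848194658000 := tg_mulStep (by norm_num) hD5_76 (by norm_num)
  have hD5_78 : 7 ^ 1562499999999994 % 3999999999999986711 = 976022339971206514 := tg_sqStep (by norm_num) hD5_77 (by norm_num)
  have hD5_79 : 7 ^ 3124999999999988 % 3999999999999986711 = 1676367671049500968 := tg_sqStep (by norm_num) hD5_78 (by norm_num)
  have hD5_80 : 7 ^ 3124999999999989 % 3999999999999986711 = 3734573697346533354 := tg_mulStep (by norm_num) hD5_79 (by norm_num)
  have hD5_81 : 7 ^ 6249999999999978 % 3999999999999986711 = 2639233448329274506 := tg_sqStep (by norm_num) hD5_80 (by norm_num)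
  have hD5_82 : 7 ^ 6249999999999979 % 3999999999999986711 = 2474634138304974698 := tg_mulStep (by norm_num) hD5_81 (by norm_num)
  have hD5_83 : 7 ^ 12499999999999958 % 3999999999999986711 = 2728545282856094298 := tg_sqStep (by norm_num) hD5_82 (by norm_num)
  have hD5_84 : 7 ^ 24999999999999916 % 3999999999999986711 = 2259137260020711681 := tg_sqStep (by norm_num) hD5_83 (by norm_num)
  have hD5_85 : 7 ^ 49999999999999832 % 3999999999999986711 = 300274621027778517 := tg_sqStep (by norm_num) hD5_84 (by norm_num)
  have hD5_86 : 7 ^ 49999999999999833 % 3999999999999986711 = 2101922347194449619 := tg_mulStep (by norm_num) hD5_85 (by norm_num)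
  have hD5_87 : 7 ^ 99999999999999666 % 3999999999999986711 = 2079434805666741980 := tg_sqStep (by norm_num) hD5_86 (by norm_num)
  have hD5_88 : 7 ^ 99999999999999667 % 3999999999999986711 = 2556043639667233727 := tg_mulStep (by norm_num) hD5_87 (by norm_num)
  have hD5_89 : 7 ^ 199999999999999334 % 3999999999999986711 = 2146655672876186981 := tg_sqStep (by norm_num) hD5_88 (by norm_num)
  have hD5_90 : 7 ^ 199999999999999335 % 3999999999999986711 = 3026589710133348734 := tg_mulStep (by norm_num) hD5_89 (by norm_num)
  have hD5_91 : 7 ^ 399999999999998670 % 3999999999999986711 = 974496000727376110 := tg_sqStep (by norm_num) hD5_90 (by norm_num)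
  have hD5_92 : 7 ^ 399999999999998671 % 3999999999999986711 = 2821472005091646059 := tg_mulStep (by norm_num) hD5_91 (by norm_num)
  have hD5_93 : 7 ^ 799999999999997342 % 3999999999999986711 = 132334922829179238 := tg_sqStep (by norm_num) hD5_92 (by norm_num)
  have hD7_1 : 7 ^ 1 % 3999999999999986711 = 7 := by norm_num
  have hD7_2 : 7 ^ 2 % 3999999999999986711 = 49 := tg_sqStep (by norm_num) hD7_1 (by norm_num)
  have hD7_3 : 7 ^ 3 % 3999999999999986711 = 343 := tg_mulStep (by norm_num) hD7_2 (by norm_num)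
  have hD7_4 : 7 ^ 6 % 3999999999999986711 = 117649 := tg_sqStep (by norm_num) hD7_3 (by norm_num)
  have hD7_5 : 7 ^ 7 % 3999999999999986711 = 823543 := tg_mulStep (by norm_num) hD7_4 (by norm_num)
  have hD7_6 : 7 ^ 14 % 3999999999999986711 = 678223072849 := tg_sqStep (by norm_num) hD7_5 (by norm_num)
  have hD7_7 : 7 ^ 15 % 3999999999999986711 = 4747561509943 := tg_mulStep (by norm_num) hD7_6 (by norm_num)
  have hD7_8 : 7 ^ 30 % 3999999999999986711 = 290692332969185564 := tg_sqStep (by norm_num) hD7_7 (by norm_num)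
  have hD7_9 : 7 ^ 31 % 3999999999999986711 = 2034846330784298948 := tg_mulStep (by norm_num) hD7_8 (by norm_num)
  have hD7_10 : 7 ^ 62 % 3999999999999986711 = 643434086166416902 := tg_sqStep (by norm_num) hD7_9 (by norm_num)
  have hD7_11 : 7 ^ 63 % 3999999999999986711 = 504038603164931603 := tg_mulStep (by norm_num) hD7_10 (by norm_num)
  have hD7_12 : 7 ^ 126 % 3999999999999986711 = 2594479962113892949 := tg_sqStep (by norm_num) hD7_11 (by norm_num)
  have hD7_13 : 7 ^ 252 % 3999999999999986711 = 3148860646864385183 := tg_sqStep (by norm_num) hD7_12 (by norm_num)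
  have hD7_14 : 7 ^ 253 % 3999999999999986711 = 2042024528050762726 := tg_mulStep (by norm_num) hD7_13 (by norm_num)
  have hD7_15 : 7 ^ 506 % 3999999999999986711 = 534112794330709801 := tg_sqStep (by norm_num) hD7_14 (by norm_num)
  have hD7_16 : 7 ^ 507 % 3999999999999986711 = 3738789560314968607 := tg_mulStep (by norm_num) hD7_15 (by norm_num)
  have hD7_17 : 7 ^ 1014 % 3999999999999986711 = 3486912043321883680 := tg_sqStep (by norm_num) hD7_16 (by norm_num)
  have hD7_18 : 7 ^ 1015 % 3999999999999986711 = 408384303253265494 := tg_mulStep (by norm_num) hD7_17 (by norm_num)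
  have hD7_19 : 7 ^ 2030 % 3999999999999986711 = 3623768644461093760 := tg_sqStep (by norm_num) hD7_18 (by norm_num)
  have hD7_20 : 7 ^ 4060 % 3999999999999986711 = 1864359593544115505 := tg_sqStep (by norm_num) hD7_19 (by norm_num)
  have hD7_21 : 7 ^ 8120 % 3999999999999986711 = 3788097387141890156 := tg_sqStep (by norm_num) hD7_20 (by norm_num)
  have hD7_22 : 7 ^ 16240 % 3999999999999986711 = 619785687522873861 := tg_sqStep (by norm_num) hD7_21 (by norm_num)
  have hD7_23 : 7 ^ 32480 % 3999999999999986711 = 3772025141281007263 := tg_sqStep (by norm_num) hD7_22 (by norm_num)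
  have hD7_24 : 7 ^ 32481 % 3999999999999986711 = 2404175988967130575 := tg_mulStep (by norm_num) hD7_23 (by norm_num)
  have hD7_25 : 7 ^ 64962 % 3999999999999986711 = 3098204942084080546 := tg_sqStep (by norm_num) hD7_24 (by norm_num)
  have hD7_26 : 7 ^ 64963 % 3999999999999986711 = 1687434594588630267 := tg_mulStep (by norm_num) hD7_25 (by norm_num)
  have hD7_27 : 7 ^ 129926 % 3999999999999986711 = 3461625255165880368 := tg_sqStep (by norm_num) hD7_26 (by norm_num)
  have hD7_28 : 7 ^ 129927 % 3999999999999986711 = 231376786161242310 := tg_mulStep (by norm_num) hD7_27 (by norm_num)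
  have hD7_29 : 7 ^ 259854 % 3999999999999986711 = 793405659870344273 := tg_sqStep (by norm_num) hD7_28 (by norm_num)
  have hD7_30 : 7 ^ 259855 % 3999999999999986711 = 1553839619092423200 := tg_mulStep (by norm_num) hD7_29 (by norm_num)
  have hD7_31 : 7 ^ 519710 % 3999999999999986711 = 2056808541585022190 := tg_sqStep (by norm_num) hD7_30 (by norm_num)
  have hD7_32 : 7 ^ 519711 % 3999999999999986711 = 2397659791095195197 := tg_mulStep (by norm_num) hD7_31 (by norm_num)
  have hD7_33 : 7 ^ 1039422 % 3999999999999986711 = 154860976778136736 := tg_sqStep (by norm_num) hD7_32 (by norm_num)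
  have hD7_34 : 7 ^ 2078844 % 3999999999999986711 = 1076266243915491615 := tg_sqStep (by norm_num) hD7_33 (by norm_num)
  have hD7_35 : 7 ^ 2078845 % 3999999999999986711 = 3533863707408454594 := tg_mulStep (by norm_num) hD7_34 (by norm_num)
  have hD7_36 : 7 ^ 4157690 % 3999999999999986711 = 1453081080453015999 := tg_sqStep (by norm_num) hD7_35 (by norm_num)
  have hD7_37 : 7 ^ 8315380 % 3999999999999986711 = 1120531294781360339 := tg_sqStep (by norm_num) hD7_36 (by norm_num)
  have hD7_38 : 7 ^ 16630760 % 3999999999999986711 = 3475569852371898944 := tg_sqStep (by norm_num) hD7_37 (by norm_num)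
  have hD7_39 : 7 ^ 33261520 % 3999999999999986711 = 3056301186319337479 := tg_sqStep (by norm_num) hD7_38 (by norm_num)
  have hD7_40 : 7 ^ 66523040 % 3999999999999986711 = 766520501970963126 := tg_sqStep (by norm_num) hD7_39 (by norm_num)
  have hD7_41 : 7 ^ 66523041 % 3999999999999986711 = 1365643513796755171 := tg_mulStep (by norm_num) hD7_40 (by norm_num)
  have hD7_42 : 7 ^ 133046082 % 3999999999999986711 = 3022666707272024375 := tg_sqStep (by norm_num) hD7_41 (by norm_num)
  have hD7_43 : 7 ^ 266092164 % 3999999999999986711 = 2467677255339338254 := tg_sqStep (by norm_num) hD7_42 (by norm_num)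
  have hD7_44 : 7 ^ 532184328 % 3999999999999986711 = 2021837066240421167 := tg_sqStep (by norm_num) hD7_43 (by norm_num)
  have hD7_45 : 7 ^ 1064368656 % 3999999999999986711 = 2617967353635073322 := tg_sqStep (by norm_num) hD7_44 (by norm_num)
  have hD7_46 : 7 ^ 2128737312 % 3999999999999986711 = 2798950652741037968 := tg_sqStep (by norm_num) hD7_45 (by norm_num)
  have hD7_47 : 7 ^ 2128737313 % 3999999999999986711 = 3592654569187318932 := tg_mulStep (by norm_num) hD7_46 (by norm_num)
  have hD7_48 : 7 ^ 4257474626 % 3999999999999986711 = 3690168047175786576 := tg_sqStep (by norm_num) hD7_47 (by norm_num)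
  have hD7_49 : 7 ^ 8514949252 % 3999999999999986711 = 932908989910998761 := tg_sqStep (by norm_num) hD7_48 (by norm_num)
  have hD7_50 : 7 ^ 8514949253 % 3999999999999986711 = 2530362929377004616 := tg_mulStep (by norm_num) hD7_49 (by norm_num)
  have hD7_51 : 7 ^ 17029898506 % 3999999999999986711 = 1410210748926553826 := tg_sqStep (by norm_num) hD7_50 (by norm_num)
  have hD7_52 : 7 ^ 17029898507 % 3999999999999986711 = 1871475242485903360 := tg_mulStep (by norm_num) hD7_51 (by norm_num)
  have hD7_53 : 7 ^ 34059797014 % 3999999999999986711 = 638788726649696156 := tg_sqStep (by norm_num) hD7_52 (by norm_num)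
  have hD7_54 : 7 ^ 68119594028 % 3999999999999986711 = 3626338259576417069 := tg_sqStep (by norm_num) hD7_53 (by norm_num)
  have hD7_55 : 7 ^ 68119594029 % 3999999999999986711 = 1384367817034999217 := tg_mulStep (by norm_num) hD7_54 (by norm_num)
  have hD7_56 : 7 ^ 136239188058 % 3999999999999986711 = 3277810028373722051 := tg_sqStep (by norm_num) hD7_55 (by norm_num)
  have hD7_57 : 7 ^ 272478376116 % 3999999999999986711 = 3426902433634386519 := tg_sqStep (by norm_num) hD7_56 (by norm_num)
  have hD7_58 : 7 ^ 544956752232 % 3999999999999986711 = 3624844996942015003 := tg_sqStep (by norm_num) hD7_57 (by norm_num)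
  have hD7_59 : 7 ^ 1089913504464 % 3999999999999986711 = 1158376219145545487 := tg_sqStep (by norm_num) hD7_58 (by norm_num)
  have hD7_60 : 7 ^ 2179827008928 % 3999999999999986711 = 781204663238906649 := tg_sqStep (by norm_num) hD7_59 (by norm_num)
  have hD7_61 : 7 ^ 4359654017856 % 3999999999999986711 = 1003226469971093278 := tg_sqStep (by norm_num) hD7_60 (by norm_num)
  have hD7_62 : 7 ^ 4359654017857 % 3999999999999986711 = 3022585289797666235 := tg_mulStep (by norm_num) hD7_61 (by norm_num)
  have hD7_63 : 7 ^ 8719308035714 % 3999999999999986711 = 670843595411066923 := tg_sqStep (by norm_num) hD7_62 (by norm_num)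
  have hD7_64 : 7 ^ 17438616071428 % 3999999999999986711 = 1106712380010627683 := tg_sqStep (by norm_num) hD7_63 (by norm_num)
  have hD7_65 : 7 ^ 34877232142856 % 3999999999999986711 = 1826381353190316668 := tg_sqStep (by norm_num) hD7_64 (by norm_num)
  have hD7_66 : 7 ^ 34877232142857 % 3999999999999986711 = 784669472332256543 := tg_mulStep (by norm_num) hD7_65 (by norm_num)
  have hD7_67 : 7 ^ 69754464285714 % 3999999999999986711 = 1968964198999971959 := tg_sqStep (by norm_num) hD7_66 (by norm_num)
  have hD7_68 : 7 ^ 139508928571428 % 3999999999999986711 = 1315092973708095227 := tg_sqStep (by norm_num) hD7_67 (by norm_num)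
  have hD7_69 : 7 ^ 279017857142856 % 3999999999999986711 = 1716622961936968512 := tg_sqStep (by norm_num) hD7_68 (by norm_num)
  have hD7_70 : 7 ^ 558035714285712 % 3999999999999986711 = 2731991693285628806 := tg_sqStep (by norm_num) hD7_69 (by norm_num)
  have hD7_71 : 7 ^ 1116071428571424 % 3999999999999986711 = 167095251476774072 := tg_sqStep (by norm_num) hD7_70 (by norm_num)
  have hD7_72 : 7 ^ 2232142857142848 % 3999999999999986711 = 449532091037202919 := tg_sqStep (by norm_num) hD7_71 (by norm_num)
  have hD7_73 : 7 ^ 2232142857142849 % 3999999999999986711 = 3146724637260420433 := tg_mulStep (by norm_num) hD7_72 (by norm_num)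
  have hD7_74 : 7 ^ 4464285714285698 % 3999999999999986711 = 2573785217727589107 := tg_sqStep (by norm_num) hD7_73 (by norm_num)
  have hD7_75 : 7 ^ 4464285714285699 % 3999999999999986711 = 2016496524093176905 := tg_mulStep (by norm_num) hD7_74 (by norm_num)
  have hD7_76 : 7 ^ 8928571428571398 % 3999999999999986711 = 3234248574099705722 := tg_sqStep (by norm_num) hD7_75 (by norm_num)
  have hD7_77 : 7 ^ 17857142857142796 % 3999999999999986711 = 2349986424065894973 := tg_sqStep (by norm_num) hD7_76 (by norm_num)
  have hD7_78 : 7 ^ 17857142857142797 % 3999999999999986711 = 449904968461317967 := tg_mulStep (by norm_num) hD7_77 (by norm_num)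
  have hD7_79 : 7 ^ 35714285714285594 % 3999999999999986711 = 3046242705449129383 := tg_sqStep (by norm_num) hD7_78 (by norm_num)
  have hD7_80 : 7 ^ 35714285714285595 % 3999999999999986711 = 1323698938143972126 := tg_mulStep (by norm_num) hD7_79 (by norm_num)
  have hD7_81 : 7 ^ 71428571428571190 % 3999999999999986711 = 1772612586833545975 := tg_sqStep (by norm_num) hD7_80 (by norm_num)
  have hD7_82 : 7 ^ 71428571428571191 % 3999999999999986711 = 408288107834861692 := tg_mulStep (by norm_num) hD7_81 (by norm_num)
  have hD7_83 : 7 ^ 142857142857142382 % 3999999999999986711 = 3180335563433394314 := tg_sqStep (by norm_num) hD7_82 (by norm_num)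
  have hD7_84 : 7 ^ 285714285714284764 % 3999999999999986711 = 3431773211770188709 := tg_sqStep (by norm_num) hD7_83 (by norm_num)
  have hD7_85 : 7 ^ 285714285714284765 % 3999999999999986711 = 22412482391400697 := tg_mulStep (by norm_num) hD7_84 (by norm_num)
  have hD7_86 : 7 ^ 571428571428569530 % 3999999999999986711 = 3974624930444593788 := tg_sqStep (by norm_num) hD7_85 (by norm_num)
  have hD13_1 : 7 ^ 1 % 3999999999999986711 = 7 := by norm_num
  have hD13_2 : 7 ^ 2 % 3999999999999986711 = 49 := tg_sqStep (by norm_num) hD13_1 (by norm_num)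
  have hD13_3 : 7 ^ 4 % 3999999999999986711 = 2401 := tg_sqStep (by norm_num) hD13_2 (by norm_num)
  have hD13_4 : 7 ^ 8 % 3999999999999986711 = 5764801 := tg_sqStep (by norm_num) hD13_3 (by norm_num)
  have hD13_5 : 7 ^ 16 % 3999999999999986711 = 33232930569601 := tg_sqStep (by norm_num) hD13_4 (by norm_num)
  have hD13_6 : 7 ^ 17 % 3999999999999986711 = 232630513987207 := tg_mulStep (by norm_num) hD13_5 (by norm_num)
  have hD13_7 : 7 ^ 34 % 3999999999999986711 = 1952291459016851450 := tg_sqStep (by norm_num) hD13_6 (by norm_num)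
  have hD13_8 : 7 ^ 68 % 3999999999999986711 = 3376803393033584434 := tg_sqStep (by norm_num) hD13_7 (by norm_num)
  have hD13_9 : 7 ^ 136 % 3999999999999986711 = 1323634911926646178 := tg_sqStep (by norm_num) hD13_8 (by norm_num)
  have hD13_10 : 7 ^ 272 % 3999999999999986711 = 1162876396301703923 := tg_sqStep (by norm_num) hD13_9 (by norm_num)
  have hD13_11 : 7 ^ 273 % 3999999999999986711 = 140134774111954039 := tg_mulStep (by norm_num) hD13_10 (by norm_num)
  have hD13_12 : 7 ^ 546 % 3999999999999986711 = 1161369346564129889 := tg_sqStep (by norm_num) hD13_11 (by norm_num)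
  have hD13_13 : 7 ^ 1092 % 3999999999999986711 = 1792440268536522102 := tg_sqStep (by norm_num) hD13_12 (by norm_num)
  have hD13_14 : 7 ^ 1093 % 3999999999999986711 = 547081879755694581 := tg_mulStep (by norm_num) hD13_13 (by norm_num)
  have hD13_15 : 7 ^ 2186 % 3999999999999986711 = 2562987591179922307 := tg_sqStep (by norm_num) hD13_14 (by norm_num)
  have hD13_16 : 7 ^ 4372 % 3999999999999986711 = 948497284153852493 := tg_sqStep (by norm_num) hD13_15 (by norm_num)
  have hD13_17 : 7 ^ 8744 % 3999999999999986711 = 370500101035398432 := tg_sqStep (by norm_num) hD13_16 (by norm_num)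
  have hD13_18 : 7 ^ 8745 % 3999999999999986711 = 2593500707247789024 := tg_mulStep (by norm_num) hD13_17 (by norm_num)
  have hD13_19 : 7 ^ 17490 % 3999999999999986711 = 1193582055778165893 := tg_sqStep (by norm_num) hD13_18 (by norm_num)
  have hD13_20 : 7 ^ 34980 % 3999999999999986711 = 2005249432864999067 := tg_sqStep (by norm_num) hD13_19 (by norm_num)
  have hD13_21 : 7 ^ 69960 % 3999999999999986711 = 3164046349896721360 := tg_sqStep (by norm_num) hD13_20 (by norm_num)
  have hD13_22 : 7 ^ 69961 % 3999999999999986711 = 2148324449277115965 := tg_mulStep (by norm_num) hD13_21 (by norm_num)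
  have hD13_23 : 7 ^ 139922 % 3999999999999986711 = 3885828872927286351 := tg_sqStep (by norm_num) hD13_22 (by norm_num)
  have hD13_24 : 7 ^ 279844 % 3999999999999986711 = 379979209830937276 := tg_sqStep (by norm_num) hD13_23 (by norm_num)
  have hD13_25 : 7 ^ 559688 % 3999999999999986711 = 3097054254859591552 := tg_sqStep (by norm_num) hD13_24 (by norm_num)
  have hD13_26 : 7 ^ 559689 % 3999999999999986711 = 1679379784017207309 := tg_mulStep (by norm_num) hD13_25 (by norm_num)
  have hD13_27 : 7 ^ 1119378 % 3999999999999986711 = 3539934402250730282 := tg_sqStep (by norm_num) hD13_26 (by norm_num)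
  have hD13_28 : 7 ^ 2238756 % 3999999999999986711 = 1377943270926685700 := tg_sqStep (by norm_num) hD13_27 (by norm_num)
  have hD13_29 : 7 ^ 4477512 % 3999999999999986711 = 347185818746126596 := tg_sqStep (by norm_num) hD13_28 (by norm_num)
  have hD13_30 : 7 ^ 8955024 % 3999999999999986711 = 2141682328469966979 := tg_sqStep (by norm_num) hD13_29 (by norm_num)
  have hD13_31 : 7 ^ 17910048 % 3999999999999986711 = 2063481363973464429 := tg_sqStep (by norm_num) hD13_30 (by norm_num)
  have hD13_32 : 7 ^ 17910049 % 3999999999999986711 = 2444369547814290870 := tg_mulStep (by norm_num) hD13_31 (by norm_num)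
  have hD13_33 : 7 ^ 35820098 % 3999999999999986711 = 1972016450876961163 := tg_sqStep (by norm_num) hD13_32 (by norm_num)
  have hD13_34 : 7 ^ 35820099 % 3999999999999986711 = 1804115156138768008 := tg_mulStep (by norm_num) hD13_33 (by norm_num)
  have hD13_35 : 7 ^ 71640198 % 3999999999999986711 = 2184654667361243344 := tg_sqStep (by norm_num) hD13_34 (by norm_num)
  have hD13_36 : 7 ^ 143280396 % 3999999999999986711 = 70852554028475021 := tg_sqStep (by norm_num) hD13_35 (by norm_num)
  have hD13_37 : 7 ^ 286560792 % 3999999999999986711 = 604893533777276074 := tg_sqStep (by norm_num) hD13_36 (by norm_num)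
  have hD13_38 : 7 ^ 573121584 % 3999999999999986711 = 2239224922890689705 := tg_sqStep (by norm_num) hD13_37 (by norm_num)
  have hD13_39 : 7 ^ 1146243168 % 3999999999999986711 = 1390580323848306667 := tg_sqStep (by norm_num) hD13_38 (by norm_num)
  have hD13_40 : 7 ^ 2292486336 % 3999999999999986711 = 3999581852598623352 := tg_sqStep (by norm_num) hD13_39 (by norm_num)
  have hD13_41 : 7 ^ 2292486337 % 3999999999999986711 = 3997072968190443198 := tg_mulStep (by norm_num) hD13_40 (by norm_num)
  have hD13_42 : 7 ^ 4584972674 % 3999999999999986711 = 3600623932860345160 := tg_sqStep (by norm_num) hD13_41 (by norm_num)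
  have hD13_43 : 7 ^ 4584972675 % 3999999999999986711 = 1204367530022495854 := tg_mulStep (by norm_num) hD13_42 (by norm_num)
  have hD13_44 : 7 ^ 9169945350 % 3999999999999986711 = 3162384161709626679 := tg_sqStep (by norm_num) hD13_43 (by norm_num)
  have hD13_45 : 7 ^ 18339890700 % 3999999999999986711 = 2026654520582941760 := tg_sqStep (by norm_num) hD13_44 (by norm_num)
  have hD13_46 : 7 ^ 36679781400 % 3999999999999986711 = 3513592777233625043 := tg_sqStep (by norm_num) hD13_45 (by norm_num)
  have hD13_47 : 7 ^ 73359562800 % 3999999999999986711 = 2563369480316884962 := tg_sqStep (by norm_num) hD13_46 (by norm_num)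
  have hD13_48 : 7 ^ 146719125600 % 3999999999999986711 = 2673845056198229097 := tg_sqStep (by norm_num) hD13_47 (by norm_num)
  have hD13_49 : 7 ^ 293438251200 % 3999999999999986711 = 2228456979186936172 := tg_sqStep (by norm_num) hD13_48 (by norm_num)
  have hD13_50 : 7 ^ 293438251201 % 3999999999999986711 = 3599198854308593071 := tg_mulStep (by norm_num) hD13_49 (by norm_num)
  have hD13_51 : 7 ^ 586876502402 % 3999999999999986711 = 284878118418224619 := tg_sqStep (by norm_num) hD13_50 (by norm_num)
  have hD13_52 : 7 ^ 586876502403 % 3999999999999986711 = 1994146828927572333 := tg_mulStep (by norm_num) hD13_51 (by norm_num)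
  have hD13_53 : 7 ^ 1173753004806 % 3999999999999986711 = 3376438494148088668 := tg_sqStep (by norm_num) hD13_52 (by norm_num)
  have hD13_54 : 7 ^ 1173753004807 % 3999999999999986711 = 3635069459036687121 := tg_mulStep (by norm_num) hD13_53 (by norm_num)
  have hD13_55 : 7 ^ 2347506009614 % 3999999999999986711 = 2487220570667818070 := tg_sqStep (by norm_num) hD13_54 (by norm_num)
  have hD13_56 : 7 ^ 2347506009615 % 3999999999999986711 = 1410543994674779646 := tg_mulStep (by norm_num) hD13_55 (by norm_num)
  have hD13_57 : 7 ^ 4695012019230 % 3999999999999986711 = 395575362173788966 := tg_sqStep (by norm_num) hD13_56 (by norm_num)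
  have hD13_58 : 7 ^ 9390024038460 % 3999999999999986711 = 2169552657441358979 := tg_sqStep (by norm_num) hD13_57 (by norm_num)
  have hD13_59 : 7 ^ 9390024038461 % 3999999999999986711 = 3186868602089552720 := tg_mulStep (by norm_num) hD13_58 (by norm_num)
  have hD13_60 : 7 ^ 18780048076922 % 3999999999999986711 = 399247203096080468 := tg_sqStep (by norm_num) hD13_59 (by norm_num)
  have hD13_61 : 7 ^ 18780048076923 % 3999999999999986711 = 2794730421672563276 := tg_mulStep (by norm_num) hD13_60 (by norm_num)
  have hD13_62 : 7 ^ 37560096153846 % 3999999999999986711 = 915436553792865945 := tg_sqStep (by norm_num) hD13_61 (by norm_num)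
  have hD13_63 : 7 ^ 75120192307692 % 3999999999999986711 = 1117924712722379423 := tg_sqStep (by norm_num) hD13_62 (by norm_num)
  have hD13_64 : 7 ^ 150240384615384 % 3999999999999986711 = 1346586832423628871 := tg_sqStep (by norm_num) hD13_63 (by norm_num)
  have hD13_65 : 7 ^ 300480769230768 % 3999999999999986711 = 3089673875444096940 := tg_sqStep (by norm_num) hD13_64 (by norm_num)
  have hD13_66 : 7 ^ 600961538461536 % 3999999999999986711 = 2647857487370217799 := tg_sqStep (by norm_num) hD13_65 (by norm_num)
  have hD13_67 : 7 ^ 1201923076923072 % 3999999999999986711 = 3733357072751181801 := tg_sqStep (by norm_num) hD13_66 (by norm_num)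
  have hD13_68 : 7 ^ 2403846153846144 % 3999999999999986711 = 177474701221541714 := tg_sqStep (by norm_num) hD13_67 (by norm_num)
  have hD13_69 : 7 ^ 2403846153846145 % 3999999999999986711 = 1242322908550791998 := tg_mulStep (by norm_num) hD13_68 (by norm_num)
  have hD13_70 : 7 ^ 4807692307692290 % 3999999999999986711 = 1068740409105919088 := tg_sqStep (by norm_num) hD13_69 (by norm_num)
  have hD13_71 : 7 ^ 4807692307692291 % 3999999999999986711 = 3481182863741446905 := tg_mulStep (by norm_num) hD13_70 (by norm_num)
  have hD13_72 : 7 ^ 9615384615384582 % 3999999999999986711 = 1702762616960086868 := tg_sqStep (by norm_num) hD13_71 (by norm_num)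
  have hD13_73 : 7 ^ 9615384615384583 % 3999999999999986711 = 3919338318720634654 := tg_mulStep (by norm_num) hD13_72 (by norm_num)
  have hD13_74 : 7 ^ 19230769230769166 % 3999999999999986711 = 3710471061125607221 := tg_sqStep (by norm_num) hD13_73 (by norm_num)
  have hD13_75 : 7 ^ 38461538461538332 % 3999999999999986711 = 1556174896840720757 := tg_sqStep (by norm_num) hD13_74 (by norm_num)
  have hD13_76 : 7 ^ 38461538461538333 % 3999999999999986711 = 2893224277885071877 := tg_mulStep (by norm_num) hD13_75 (by norm_num)
  have hD13_77 : 7 ^ 76923076923076666 % 3999999999999986711 = 2349365727109210224 := tg_sqStep (by norm_num) hD13_76 (by norm_num)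
  have hD13_78 : 7 ^ 76923076923076667 % 3999999999999986711 = 445560089764524724 := tg_mulStep (by norm_num) hD13_77 (by norm_num)
  have hD13_79 : 7 ^ 153846153846153334 % 3999999999999986711 = 1266452183213963309 := tg_sqStep (by norm_num) hD13_78 (by norm_num)
  have hD13_80 : 7 ^ 153846153846153335 % 3999999999999986711 = 865165282497769741 := tg_mulStep (by norm_num) hD13_79 (by norm_num)
  have hD13_81 : 7 ^ 307692307692306670 % 3999999999999986711 = 3674995563612002820 := tg_sqStep (by norm_num) hD13_80 (by norm_num)
  have hD233_1 : 7 ^ 1 % 3999999999999986711 = 7 := by norm_num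
  have hD233_2 : 7 ^ 2 % 3999999999999986711 = 49 := tg_sqStep (by norm_num) hD233_1 (by norm_num)
  have hD233_3 : 7 ^ 3 % 3999999999999986711 = 343 := tg_mulStep (by norm_num) hD233_2 (by norm_num)
  have hD233_4 : 7 ^ 6 % 3999999999999986711 = 117649 := tg_sqStep (by norm_num) hD233_3 (by norm_num)
  have hD233_5 : 7 ^ 7 % 3999999999999986711 = 823543 := tg_mulStep (by norm_num) hD233_4 (by norm_num)
  have hD233_6 : 7 ^ 14 % 3999999999999986711 = 678223072849 := tg_sqStep (by norm_num) hD233_5 (by norm_num)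
  have hD233_7 : 7 ^ 15 % 3999999999999986711 = 4747561509943 := tg_mulStep (by norm_num) hD233_6 (by norm_num)
  have hD233_8 : 7 ^ 30 % 3999999999999986711 = 290692332969185564 := tg_sqStep (by norm_num) hD233_7 (by norm_num)
  have hD233_9 : 7 ^ 60 % 3999999999999986711 = 1155988450738086344 := tg_sqStep (by norm_num) hD233_8 (by norm_num)
  have hD233_10 : 7 ^ 120 % 3999999999999986711 = 1631791128526051867 := tg_sqStep (by norm_num) hD233_9 (by norm_num)
  have hD233_11 : 7 ^ 121 % 3999999999999986711 = 3422537899682389647 := tg_mulStep (by norm_num) hD233_10 (by norm_num)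
  have hD233_12 : 7 ^ 242 % 3999999999999986711 = 3009131915656291086 := tg_sqStep (by norm_num) hD233_11 (by norm_num)
  have hD233_13 : 7 ^ 243 % 3999999999999986711 = 1063923409594104047 := tg_mulStep (by norm_num) hD233_12 (by norm_num)
  have hD233_14 : 7 ^ 486 % 3999999999999986711 = 3887312684390574038 := tg_sqStep (by norm_num) hD233_13 (by norm_num)
  have hD233_15 : 7 ^ 487 % 3999999999999986711 = 3211188790734098000 := tg_mulStep (by norm_num) hD233_14 (by norm_num)
  have hD233_16 : 7 ^ 974 % 3999999999999986711 = 3418193260202395447 := tg_sqStep (by norm_num) hD233_15 (by norm_num)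
  have hD233_17 : 7 ^ 975 % 3999999999999986711 = 3927352821416834574 := tg_mulStep (by norm_num) hD233_16 (by norm_num)
  have hD233_18 : 7 ^ 1950 % 3999999999999986711 = 69053501365695825 := tg_sqStep (by norm_num) hD233_17 (by norm_num)
  have hD233_19 : 7 ^ 1951 % 3999999999999986711 = 483374509559870775 := tg_mulStep (by norm_num) hD233_18 (by norm_num)
  have hD233_20 : 7 ^ 3902 % 3999999999999986711 = 3498361551064623291 := tg_sqStep (by norm_num) hD233_19 (by norm_num)
  have hD233_21 : 7 ^ 3903 % 3999999999999986711 = 488530857452442771 := tg_mulStep (by norm_num) hD233_20 (by norm_num)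
  have hD233_22 : 7 ^ 7806 % 3999999999999986711 = 3421027980356966234 := tg_sqStep (by norm_num) hD233_21 (by norm_num)
  have hD233_23 : 7 ^ 15612 % 3999999999999986711 = 2714311246786469729 := tg_sqStep (by norm_num) hD233_22 (by norm_num)
  have hD233_24 : 7 ^ 15613 % 3999999999999986711 = 3000178727505341259 := tg_mulStep (by norm_num) hD233_23 (by norm_num)
  have hD233_25 : 7 ^ 31226 % 3999999999999986711 = 3322535226230220376 := tg_sqStep (by norm_num) hD233_24 (by norm_num)
  have hD233_26 : 7 ^ 31227 % 3999999999999986711 = 3257746583611609077 := tg_mulStep (by norm_num) hD233_25 (by norm_num)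
  have hD233_27 : 7 ^ 62454 % 3999999999999986711 = 1580693321937784782 := tg_sqStep (by norm_num) hD233_26 (by norm_num)
  have hD233_28 : 7 ^ 124908 % 3999999999999986711 = 1710327964035413858 := tg_sqStep (by norm_num) hD233_27 (by norm_num)
  have hD233_29 : 7 ^ 124909 % 3999999999999986711 = 3972295748247923584 := tg_mulStep (by norm_num) hD233_28 (by norm_num)
  have hD233_30 : 7 ^ 249818 % 3999999999999986711 = 3392016509785004376 := tg_sqStep (by norm_num) hD233_29 (by norm_num)
  have hD233_31 : 7 ^ 499636 % 3999999999999986711 = 739043455859459268 := tg_sqStep (by norm_num) hD233_30 (by norm_num)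
  have hD233_32 : 7 ^ 999272 % 3999999999999986711 = 2011531313725840311 := tg_sqStep (by norm_num) hD233_31 (by norm_num)
  have hD233_33 : 7 ^ 999273 % 3999999999999986711 = 2080719196080922044 := tg_mulStep (by norm_num) hD233_32 (by norm_num)
  have hD233_34 : 7 ^ 1998546 % 3999999999999986711 = 3991072623966971672 := tg_sqStep (by norm_num) hD233_33 (by norm_num)
  have hD233_35 : 7 ^ 3997092 % 3999999999999986711 = 3599482143608245289 := tg_sqStep (by norm_num) hD233_34 (by norm_num)
  have hD233_36 : 7 ^ 7994184 % 3999999999999986711 = 1982373468881984910 := tg_sqStep (by norm_num) hD233_35 (by norm_num)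
  have hD233_37 : 7 ^ 7994185 % 3999999999999986711 = 1876614282173934237 := tg_mulStep (by norm_num) hD233_36 (by norm_num)
  have hD233_38 : 7 ^ 15988370 % 3999999999999986711 = 2501446082485174807 := tg_sqStep (by norm_num) hD233_37 (by norm_num)
  have hD233_39 : 7 ^ 31976740 % 3999999999999986711 = 436591961493353581 := tg_sqStep (by norm_num) hD233_38 (by norm_num)
  have hD233_40 : 7 ^ 63953480 % 3999999999999986711 = 1296236245617272099 := tg_sqStep (by norm_num) hD233_39 (by norm_num)
  have hD233_41 : 7 ^ 63953481 % 3999999999999986711 = 1073653719320931271 := tg_mulStep (by norm_num) hD233_40 (by norm_num)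
  have hD233_42 : 7 ^ 127906962 % 3999999999999986711 = 73004192735954177 := tg_sqStep (by norm_num) hD233_41 (by norm_num)
  have hD233_43 : 7 ^ 127906963 % 3999999999999986711 = 511029349151679239 := tg_mulStep (by norm_num) hD233_42 (by norm_num)
  have hD233_44 : 7 ^ 255813926 % 3999999999999986711 = 2157872859229972703 := tg_sqStep (by norm_num) hD233_43 (by norm_num)
  have hD233_45 : 7 ^ 511627852 % 3999999999999986711 = 3057675886970316505 := tg_sqStep (by norm_num) hD233_44 (by norm_num)
  have hD233_46 : 7 ^ 1023255704 % 3999999999999986711 = 177894899180985481 := tg_sqStep (by norm_num) hD233_45 (by norm_num)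
  have hD233_47 : 7 ^ 2046511408 % 3999999999999986711 = 1896579334746146258 := tg_sqStep (by norm_num) hD233_46 (by norm_num)
  have hD233_48 : 7 ^ 4093022816 % 3999999999999986711 = 862212535553117171 := tg_sqStep (by norm_num) hD233_47 (by norm_num)
  have hD233_49 : 7 ^ 4093022817 % 3999999999999986711 = 2035487748871833486 := tg_mulStep (by norm_num) hD233_48 (by norm_num)
  have hD233_50 : 7 ^ 8186045634 % 3999999999999986711 = 3639023709239662430 := tg_sqStep (by norm_num) hD233_49 (by norm_num)
  have hD233_51 : 7 ^ 16372091268 % 3999999999999986711 = 1784761598277361389 := tg_sqStep (by norm_num) hD233_50 (by norm_num)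
  have hD233_52 : 7 ^ 32744182536 % 3999999999999986711 = 2395856116249905257 := tg_sqStep (by norm_num) hD233_51 (by norm_num)
  have hD233_53 : 7 ^ 32744182537 % 3999999999999986711 = 770992813749389955 := tg_mulStep (by norm_num) hD233_52 (by norm_num)
  have hD233_54 : 7 ^ 65488365074 % 3999999999999986711 = 3285170044710163455 := tg_sqStep (by norm_num) hD233_53 (by norm_num)
  have hD233_55 : 7 ^ 65488365075 % 3999999999999986711 = 2996190312971210630 := tg_mulStep (by norm_num) hD233_54 (by norm_num)
  have hD233_56 : 7 ^ 130976730150 % 3999999999999986711 = 2335905010064817448 := tg_sqStep (by norm_num) hD233_55 (by norm_num)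
  have hD233_57 : 7 ^ 261953460300 % 3999999999999986711 = 2739805020166234977 := tg_sqStep (by norm_num) hD233_56 (by norm_num)
  have hD233_58 : 7 ^ 523906920600 % 3999999999999986711 = 3570440245152049823 := tg_sqStep (by norm_num) hD233_57 (by norm_num)
  have hD233_59 : 7 ^ 1047813841200 % 3999999999999986711 = 3779437142014643462 := tg_sqStep (by norm_num) hD233_58 (by norm_num)
  have hD233_60 : 7 ^ 1047813841201 % 3999999999999986711 = 2456059994102583968 := tg_mulStep (by norm_num) hD233_59 (by norm_num)
  have hD233_61 : 7 ^ 2095627682402 % 3999999999999986711 = 250101093010891425 := tg_sqStep (by norm_num) hD233_60 (by norm_num)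
  have hD233_62 : 7 ^ 2095627682403 % 3999999999999986711 = 1750707651076239975 := tg_mulStep (by norm_num) hD233_61 (by norm_num)
  have hD233_63 : 7 ^ 4191255364806 % 3999999999999986711 = 2715676925240058886 := tg_sqStep (by norm_num) hD233_62 (by norm_num)
  have hD233_64 : 7 ^ 8382510729612 % 3999999999999986711 = 1025825757879143576 := tg_sqStep (by norm_num) hD233_63 (by norm_num)
  have hD233_65 : 7 ^ 8382510729613 % 3999999999999986711 = 3180780305154018321 := tg_mulStep (by norm_num) hD233_64 (by norm_num)
  have hD233_66 : 7 ^ 16765021459226 % 3999999999999986711 = 1526045846931123361 := tg_sqStep (by norm_num) hD233_65 (by norm_num)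
  have hD233_67 : 7 ^ 16765021459227 % 3999999999999986711 = 2682320928517890105 := tg_mulStep (by norm_num) hD233_66 (by norm_num)
  have hD233_68 : 7 ^ 33530042918454 % 3999999999999986711 = 1435118595010452470 := tg_sqStep (by norm_num) hD233_67 (by norm_num)
  have hD233_69 : 7 ^ 67060085836908 % 3999999999999986711 = 3512558055730874487 := tg_sqStep (by norm_num) hD233_68 (by norm_num)
  have hD233_70 : 7 ^ 67060085836909 % 3999999999999986711 = 587906390116201143 := tg_mulStep (by norm_num) hD233_69 (by norm_num)
  have hD233_71 : 7 ^ 134120171673818 % 3999999999999986711 = 1285812724618900050 := tg_sqStep (by norm_num) hD233_70 (by norm_num)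
  have hD233_72 : 7 ^ 134120171673819 % 3999999999999986711 = 1000689072332326928 := tg_mulStep (by norm_num) hD233_71 (by norm_num)
  have hD233_73 : 7 ^ 268240343347638 % 3999999999999986711 = 1302421404232639194 := tg_sqStep (by norm_num) hD233_72 (by norm_num)
  have hD233_74 : 7 ^ 536480686695276 % 3999999999999986711 = 2941643308582713341 := tg_sqStep (by norm_num) hD233_73 (by norm_num)
  have hD233_75 : 7 ^ 536480686695277 % 3999999999999986711 = 591503160079059832 := tg_mulStep (by norm_num) hD233_74 (by norm_num)
  have hD233_76 : 7 ^ 1072961373390554 % 3999999999999986711 = 3295891104168709864 := tg_sqStep (by norm_num) hD233_75 (by norm_num)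
  have hD233_77 : 7 ^ 2145922746781108 % 3999999999999986711 = 1121209801654762940 := tg_sqStep (by norm_num) hD233_76 (by norm_num)
  have hD233_78 : 7 ^ 4291845493562216 % 3999999999999986711 = 1186277245783089873 := tg_sqStep (by norm_num) hD233_77 (by norm_num)
  have hD233_79 : 7 ^ 4291845493562217 % 3999999999999986711 = 303940720481655689 := tg_mulStep (by norm_num) hD233_78 (by norm_num)
  have hD233_80 : 7 ^ 8583690987124434 % 3999999999999986711 = 954831678407031506 := tg_sqStep (by norm_num) hD233_79 (by norm_num)
  have hD233_81 : 7 ^ 8583690987124435 % 3999999999999986711 = 2683821748849233831 := tg_mulStep (by norm_num) hD233_80 (by norm_num)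
  have hD233_82 : 7 ^ 17167381974248870 % 3999999999999986711 = 103310689136845180 := tg_sqStep (by norm_num) hD233_81 (by norm_num)
  have hD541_1 : 7 ^ 1 % 3999999999999986711 = 7 := by norm_num
  have hD541_2 : 7 ^ 2 % 3999999999999986711 = 49 := tg_sqStep (by norm_num) hD541_1 (by norm_num)
  have hD541_3 : 7 ^ 3 % 3999999999999986711 = 343 := tg_mulStep (by norm_num) hD541_2 (by norm_num)
  have hD541_4 : 7 ^ 6 % 3999999999999986711 = 117649 := tg_sqStep (by norm_num) hD541_3 (by norm_num)
  have hD541_5 : 7 ^ 12 % 3999999999999986711 = 13841287201 := tg_sqStep (by norm_num) hD541_4 (by norm_num)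
  have hD541_6 : 7 ^ 13 % 3999999999999986711 = 96889010407 := tg_mulStep (by norm_num) hD541_5 (by norm_num)
  have hD541_7 : 7 ^ 26 % 3999999999999986711 = 3480337647785481643 := tg_sqStep (by norm_num) hD541_6 (by norm_num)
  have hD541_8 : 7 ^ 52 % 3999999999999986711 = 1521770683149066480 := tg_sqStep (by norm_num) hD541_7 (by norm_num)
  have hD541_9 : 7 ^ 104 % 3999999999999986711 = 806311168054032405 := tg_sqStep (by norm_num) hD541_8 (by norm_num)
  have hD541_10 : 7 ^ 105 % 3999999999999986711 = 1644178176378240124 := tg_mulStep (by norm_num) hD541_9 (by norm_num)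
  have hD541_11 : 7 ^ 210 % 3999999999999986711 = 3590834712247894739 := tg_sqStep (by norm_num) hD541_10 (by norm_num)
  have hD541_12 : 7 ^ 420 % 3999999999999986711 = 911773354083897139 := tg_sqStep (by norm_num) hD541_11 (by norm_num)
  have hD541_13 : 7 ^ 840 % 3999999999999986711 = 1529356504447601744 := tg_sqStep (by norm_num) hD541_12 (by norm_num)
  have hD541_14 : 7 ^ 1680 % 3999999999999986711 = 3491203489415879621 := tg_sqStep (by norm_num) hD541_13 (by norm_num)
  have hD541_15 : 7 ^ 1681 % 3999999999999986711 = 438424425911237081 := tg_mulStep (by norm_num) hD541_14 (by norm_num)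
  have hD541_16 : 7 ^ 3362 % 3999999999999986711 = 2972090238756344429 := tg_sqStep (by norm_num) hD541_15 (by norm_num)
  have hD541_17 : 7 ^ 6724 % 3999999999999986711 = 3063881842497513357 := tg_sqStep (by norm_num) hD541_16 (by norm_num)
  have hD541_18 : 7 ^ 13448 % 3999999999999986711 = 773490293643477661 := tg_sqStep (by norm_num) hD541_17 (by norm_num)
  have hD541_19 : 7 ^ 13449 % 3999999999999986711 = 1414432055504356916 := tg_mulStep (by norm_num) hD541_18 (by norm_num)
  have hD541_20 : 7 ^ 26898 % 3999999999999986711 = 2110342847015511824 := tg_sqStep (by norm_num) hD541_19 (by norm_num)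
  have hD541_21 : 7 ^ 53796 % 3999999999999986711 = 2441181142078739652 := tg_sqStep (by norm_num) hD541_20 (by norm_num)
  have hD541_22 : 7 ^ 107592 % 3999999999999986711 = 1687880403508893667 := tg_sqStep (by norm_num) hD541_21 (by norm_num)
  have hD541_23 : 7 ^ 215184 % 3999999999999986711 = 1630955687407913777 := tg_sqStep (by norm_num) hD541_22 (by norm_num)
  have hD541_24 : 7 ^ 215185 % 3999999999999986711 = 3416689811855423017 := tg_mulStep (by norm_num) hD541_23 (by norm_num)
  have hD541_25 : 7 ^ 430370 % 3999999999999986711 = 1469266820289180020 := tg_sqStep (by norm_num) hD541_24 (by norm_num)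
  have hD541_26 : 7 ^ 860740 % 3999999999999986711 = 760038262586737333 := tg_sqStep (by norm_num) hD541_25 (by norm_num)
  have hD541_27 : 7 ^ 860741 % 3999999999999986711 = 1320267838107174620 := tg_mulStep (by norm_num) hD541_26 (by norm_num)
  have hD541_28 : 7 ^ 1721482 % 3999999999999986711 = 2721006248396411690 := tg_sqStep (by norm_num) hD541_27 (by norm_num)
  have hD541_29 : 7 ^ 1721483 % 3999999999999986711 = 3047043738774934986 := tg_mulStep (by norm_num) hD541_28 (by norm_num)
  have hD541_30 : 7 ^ 3442966 % 3999999999999986711 = 2846242292159907226 := tg_sqStep (by norm_num) hD541_29 (by norm_num)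
  have hD541_31 : 7 ^ 3442967 % 3999999999999986711 = 3923696045119403738 := tg_mulStep (by norm_num) hD541_30 (by norm_num)
  have hD541_32 : 7 ^ 6885934 % 3999999999999986711 = 1448491537768918564 := tg_sqStep (by norm_num) hD541_31 (by norm_num)
  have hD541_33 : 7 ^ 13771868 % 3999999999999986711 = 1288489058522913535 := tg_sqStep (by norm_num) hD541_32 (by norm_num)
  have hD541_34 : 7 ^ 27543736 % 3999999999999986711 = 141556804891177981 := tg_sqStep (by norm_num) hD541_33 (by norm_num)
  have hD541_35 : 7 ^ 55087472 % 3999999999999986711 = 937602198610983047 := tg_sqStep (by norm_num) hD541_34 (by norm_num)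
  have hD541_36 : 7 ^ 110174944 % 3999999999999986711 = 572116161417117104 := tg_sqStep (by norm_num) hD541_35 (by norm_num)
  have hD541_37 : 7 ^ 220349888 % 3999999999999986711 = 1058400349761488646 := tg_sqStep (by norm_num) hD541_36 (by norm_num)
  have hD541_38 : 7 ^ 440699776 % 3999999999999986711 = 573732537645345461 := tg_sqStep (by norm_num) hD541_37 (by norm_num)
  have hD541_39 : 7 ^ 881399552 % 3999999999999986711 = 160192363584031211 := tg_sqStep (by norm_num) hD541_38 (by norm_num)
  have hD541_40 : 7 ^ 881399553 % 3999999999999986711 = 1121346545088218477 := tg_mulStep (by norm_num) hD541_39 (by norm_num)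
  have hD541_41 : 7 ^ 1762799106 % 3999999999999986711 = 3243203378468815667 := tg_sqStep (by norm_num) hD541_40 (by norm_num)
  have hD541_42 : 7 ^ 3525598212 % 3999999999999986711 = 2615834378804486015 := tg_sqStep (by norm_num) hD541_41 (by norm_num)
  have hD541_43 : 7 ^ 7051196424 % 3999999999999986711 = 2754602611108957124 := tg_sqStep (by norm_num) hD541_42 (by norm_num)
  have hD541_44 : 7 ^ 14102392848 % 3999999999999986711 = 2213412985397199045 := tg_sqStep (by norm_num) hD541_43 (by norm_num)
  have hD541_45 : 7 ^ 28204785696 % 3999999999999986711 = 1180344911039125868 := tg_sqStep (by norm_num) hD541_44 (by norm_num)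
  have hD541_46 : 7 ^ 28204785697 % 3999999999999986711 = 262414377273907654 := tg_mulStep (by norm_num) hD541_45 (by norm_num)
  have hD541_47 : 7 ^ 56409571394 % 3999999999999986711 = 2609380384245756654 := tg_sqStep (by norm_num) hD541_46 (by norm_num)
  have hD541_48 : 7 ^ 56409571395 % 3999999999999986711 = 2265662689720349734 := tg_mulStep (by norm_num) hD541_47 (by norm_num)
  have hD541_49 : 7 ^ 112819142790 % 3999999999999986711 = 2093461216031110345 := tg_sqStep (by norm_num) hD541_48 (by norm_num)
  have hD541_50 : 7 ^ 112819142791 % 3999999999999986711 = 2654228512217812282 := tg_mulStep (by norm_num) hD541_49 (by norm_num)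
  have hD541_51 : 7 ^ 225638285582 % 3999999999999986711 = 3359164829513108943 := tg_sqStep (by norm_num) hD541_50 (by norm_num)
  have hD541_52 : 7 ^ 451276571164 % 3999999999999986711 = 3035514174756018620 := tg_sqStep (by norm_num) hD541_51 (by norm_num)
  have hD541_53 : 7 ^ 902553142328 % 3999999999999986711 = 2569416180910332160 := tg_sqStep (by norm_num) hD541_52 (by norm_num)
  have hD541_54 : 7 ^ 902553142329 % 3999999999999986711 = 1985913266372378276 := tg_mulStep (by norm_num) hD541_53 (by norm_num)
  have hD541_55 : 7 ^ 1805106284658 % 3999999999999986711 = 3156535449621114203 := tg_sqStep (by norm_num) hD541_54 (by norm_num)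
  have hD541_56 : 7 ^ 3610212569316 % 3999999999999986711 = 2635176700921595284 := tg_sqStep (by norm_num) hD541_55 (by norm_num)
  have hD541_57 : 7 ^ 7220425138632 % 3999999999999986711 = 1525788684673558509 := tg_sqStep (by norm_num) hD541_56 (by norm_num)
  have hD541_58 : 7 ^ 14440850277264 % 3999999999999986711 = 843261497718156378 := tg_sqStep (by norm_num) hD541_57 (by norm_num)
  have hD541_59 : 7 ^ 28881700554528 % 3999999999999986711 = 719102443163732890 := tg_sqStep (by norm_num) hD541_58 (by norm_num)
  have hD541_60 : 7 ^ 57763401109056 % 3999999999999986711 = 1386837624387542328 := tg_sqStep (by norm_num) hD541_59 (by norm_num)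
  have hD541_61 : 7 ^ 57763401109057 % 3999999999999986711 = 1707863370712822874 := tg_mulStep (by norm_num) hD541_60 (by norm_num)
  have hD541_62 : 7 ^ 115526802218114 % 3999999999999986711 = 2443373953946549841 := tg_sqStep (by norm_num) hD541_61 (by norm_num)
  have hD541_63 : 7 ^ 231053604436228 % 3999999999999986711 = 1413256871914829117 := tg_sqStep (by norm_num) hD541_62 (by norm_num)
  have hD541_64 : 7 ^ 462107208872456 % 3999999999999986711 = 132405413964847332 := tg_sqStep (by norm_num) hD541_63 (by norm_num)
  have hD541_65 : 7 ^ 924214417744912 % 3999999999999986711 = 3124754700486502253 := tg_sqStep (by norm_num) hD541_64 (by norm_num)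
  have hD541_66 : 7 ^ 924214417744913 % 3999999999999986711 = 1873282903405582216 := tg_mulStep (by norm_num) hD541_65 (by norm_num)
  have hD541_67 : 7 ^ 1848428835489826 % 3999999999999986711 = 1554414067676337554 := tg_sqStep (by norm_num) hD541_66 (by norm_num)
  have hD541_68 : 7 ^ 1848428835489827 % 3999999999999986711 = 2880898473734389456 := tg_mulStep (by norm_num) hD541_67 (by norm_num)
  have hD541_69 : 7 ^ 3696857670979654 % 3999999999999986711 = 3561148289344174620 := tg_sqStep (by norm_num) hD541_68 (by norm_num)
  have hD541_70 : 7 ^ 3696857670979655 % 3999999999999986711 = 928038025409302074 := tg_mulStep (by norm_num) hD541_69 (by norm_num)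
  have hD541_71 : 7 ^ 7393715341959310 % 3999999999999986711 = 3237273015732843011 := tg_sqStep (by norm_num) hD541_70 (by norm_num)
  have hD38933_1 : 7 ^ 1 % 3999999999999986711 = 7 := by norm_num
  have hD38933_2 : 7 ^ 2 % 3999999999999986711 = 49 := tg_sqStep (by norm_num) hD38933_1 (by norm_num)
  have hD38933_3 : 7 ^ 4 % 3999999999999986711 = 2401 := tg_sqStep (by norm_num) hD38933_2 (by norm_num)
  have hD38933_4 : 7 ^ 5 % 3999999999999986711 = 16807 := tg_mulStep (by norm_num) hD38933_3 (by norm_num)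
  have hD38933_5 : 7 ^ 10 % 3999999999999986711 = 282475249 := tg_sqStep (by norm_num) hD38933_4 (by norm_num)
  have hD38933_6 : 7 ^ 11 % 3999999999999986711 = 1977326743 := tg_mulStep (by norm_num) hD38933_5 (by norm_num)
  have hD38933_7 : 7 ^ 22 % 3999999999999986711 = 3909821048582988049 := tg_sqStep (by norm_num) hD38933_6 (by norm_num)
  have hD38933_8 : 7 ^ 23 % 3999999999999986711 = 3368747340080996077 := tg_mulStep (by norm_num) hD38933_7 (by norm_num)
  have hD38933_9 : 7 ^ 46 % 3999999999999986711 = 311651792796224594 := tg_sqStep (by norm_num) hD38933_8 (by norm_num)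
  have hD38933_10 : 7 ^ 92 % 3999999999999986711 = 2422762534281019559 := tg_sqStep (by norm_num) hD38933_9 (by norm_num)
  have hD38933_11 : 7 ^ 93 % 3999999999999986711 = 959337739967190069 := tg_mulStep (by norm_num) hD38933_10 (by norm_num)
  have hD38933_12 : 7 ^ 186 % 3999999999999986711 = 3453570395246308690 := tg_sqStep (by norm_num) hD38933_11 (by norm_num)
  have hD38933_13 : 7 ^ 372 % 3999999999999986711 = 1660153879667898468 := tg_sqStep (by norm_num) hD38933_12 (by norm_num)
  have hD38933_14 : 7 ^ 373 % 3999999999999986711 = 3621077157675315854 := tg_mulStep (by norm_num) hD38933_13 (by norm_num)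
  have hD38933_15 : 7 ^ 746 % 3999999999999986711 = 820470869918837467 := tg_sqStep (by norm_num) hD38933_14 (by norm_num)
  have hD38933_16 : 7 ^ 747 % 3999999999999986711 = 1743296089431875558 := tg_mulStep (by norm_num) hD38933_15 (by norm_num)
  have hD38933_17 : 7 ^ 1494 % 3999999999999986711 = 166402668865358474 := tg_sqStep (by norm_num) hD38933_16 (by norm_num)
  have hD38933_18 : 7 ^ 1495 % 3999999999999986711 = 1164818682057509318 := tg_mulStep (by norm_num) hD38933_17 (by norm_num)
  have hD38933_19 : 7 ^ 2990 % 3999999999999986711 = 3631576911370416343 := tg_sqStep (by norm_num) hD38933_18 (by norm_num)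
  have hD38933_20 : 7 ^ 5980 % 3999999999999986711 = 1527576475164202866 := tg_sqStep (by norm_num) hD38933_19 (by norm_num)
  have hD38933_21 : 7 ^ 11960 % 3999999999999986711 = 3922095945347755085 := tg_sqStep (by norm_num) hD38933_20 (by norm_num)
  have hD38933_22 : 7 ^ 23920 % 3999999999999986711 = 213103593626202018 := tg_sqStep (by norm_num) hD38933_21 (by norm_num)
  have hD38933_23 : 7 ^ 23921 % 3999999999999986711 = 1491725155383414126 := tg_mulStep (by norm_num) hD38933_22 (by norm_num)
  have hD38933_24 : 7 ^ 47842 % 3999999999999986711 = 3036762471436934854 := tg_sqStep (by norm_num) hD38933_23 (by norm_num)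
  have hD38933_25 : 7 ^ 95684 % 3999999999999986711 = 533717047744355383 := tg_sqStep (by norm_num) hD38933_24 (by norm_num)
  have hD38933_26 : 7 ^ 191368 % 3999999999999986711 = 1776519199869091252 := tg_sqStep (by norm_num) hD38933_25 (by norm_num)
  have hD38933_27 : 7 ^ 191369 % 3999999999999986711 = 435634399083678631 := tg_mulStep (by norm_num) hD38933_26 (by norm_num)
  have hD38933_28 : 7 ^ 382738 % 3999999999999986711 = 3744391130826995139 := tg_sqStep (by norm_num) hD38933_27 (by norm_num)
  have hD38933_29 : 7 ^ 765476 % 3999999999999986711 = 2223004061136640110 := tg_sqStep (by norm_num) hD38933_28 (by norm_num)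
  have hD38933_30 : 7 ^ 765477 % 3999999999999986711 = 3561028427956520637 := tg_mulStep (by norm_num) hD38933_29 (by norm_num)
  have hD38933_31 : 7 ^ 1530954 % 3999999999999986711 = 1851208374856889225 := tg_sqStep (by norm_num) hD38933_30 (by norm_num)
  have hD38933_32 : 7 ^ 3061908 % 3999999999999986711 = 3814211955770403566 := tg_sqStep (by norm_num) hD38933_31 (by norm_num)
  have hD38933_33 : 7 ^ 6123816 % 3999999999999986711 = 1617304171700199671 := tg_sqStep (by norm_num) hD38933_32 (by norm_num)
  have hD38933_34 : 7 ^ 6123817 % 3999999999999986711 = 3321129201901424275 := tg_mulStep (by norm_num) hD38933_33 (by norm_num)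
  have hD38933_35 : 7 ^ 12247634 % 3999999999999986711 = 2280610817395725203 := tg_sqStep (by norm_num) hD38933_34 (by norm_num)
  have hD38933_36 : 7 ^ 24495268 % 3999999999999986711 = 1838433366658036918 := tg_sqStep (by norm_num) hD38933_35 (by norm_num)
  have hD38933_37 : 7 ^ 24495269 % 3999999999999986711 = 869033566606298293 := tg_mulStep (by norm_num) hD38933_36 (by norm_num)
  have hD38933_38 : 7 ^ 48990538 % 3999999999999986711 = 646055240550882349 := tg_sqStep (by norm_num) hD38933_37 (by norm_num)
  have hD38933_39 : 7 ^ 97981076 % 3999999999999986711 = 3358591633209761241 := tg_sqStep (by norm_num) hD38933_38 (by norm_num)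
  have hD38933_40 : 7 ^ 195962152 % 3999999999999986711 = 2382261614500035216 := tg_sqStep (by norm_num) hD38933_39 (by norm_num)
  have hD38933_41 : 7 ^ 195962153 % 3999999999999986711 = 675831301500299668 := tg_mulStep (by norm_num) hD38933_40 (by norm_num)
  have hD38933_42 : 7 ^ 391924306 % 3999999999999986711 = 1709786427798342537 := tg_sqStep (by norm_num) hD38933_41 (by norm_num)
  have hD38933_43 : 7 ^ 391924307 % 3999999999999986711 = 3968504994588424337 := tg_mulStep (by norm_num) hD38933_42 (by norm_num)
  have hD38933_44 : 7 ^ 783848614 % 3999999999999986711 = 2518724596968555230 := tg_sqStep (by norm_num) hD38933_43 (by norm_num)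
  have hD38933_45 : 7 ^ 1567697228 % 3999999999999986711 = 1975250626267237657 := tg_sqStep (by norm_num) hD38933_44 (by norm_num)
  have hD38933_46 : 7 ^ 1567697229 % 3999999999999986711 = 1826754383870703466 := tg_mulStep (by norm_num) hD38933_45 (by norm_num)
  have hD38933_47 : 7 ^ 3135394458 % 3999999999999986711 = 1828870784037619726 := tg_sqStep (by norm_num) hD38933_46 (by norm_num)
  have hD38933_48 : 7 ^ 3135394459 % 3999999999999986711 = 802095488263377949 := tg_mulStep (by norm_num) hD38933_47 (by norm_num)
  have hD38933_49 : 7 ^ 6270788918 % 3999999999999986711 = 2525921816673943979 := tg_sqStep (by norm_num) hD38933_48 (by norm_num)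
  have hD38933_50 : 7 ^ 6270788919 % 3999999999999986711 = 1681452716717661009 := tg_mulStep (by norm_num) hD38933_49 (by norm_num)
  have hD38933_51 : 7 ^ 12541577838 % 3999999999999986711 = 2957477508536970063 := tg_sqStep (by norm_num) hD38933_50 (by norm_num)
  have hD38933_52 : 7 ^ 25083155676 % 3999999999999986711 = 2507106413819876127 := tg_sqStep (by norm_num) hD38933_51 (by norm_num)
  have hD38933_53 : 7 ^ 25083155677 % 3999999999999986711 = 1549744896739186045 := tg_mulStep (by norm_num) hD38933_52 (by norm_num)
  have hD38933_54 : 7 ^ 50166311354 % 3999999999999986711 = 491287747909223136 := tg_sqStep (by norm_num) hD38933_53 (by norm_num)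
  have hD38933_55 : 7 ^ 50166311355 % 3999999999999986711 = 3439014235364561952 := tg_mulStep (by norm_num) hD38933_54 (by norm_num)
  have hD38933_56 : 7 ^ 100332622710 % 3999999999999986711 = 1716806059957809804 := tg_sqStep (by norm_num) hD38933_55 (by norm_num)
  have hD38933_57 : 7 ^ 200665245420 % 3999999999999986711 = 3747224075655041211 := tg_sqStep (by norm_num) hD38933_56 (by norm_num)
  have hD38933_58 : 7 ^ 200665245421 % 3999999999999986711 = 2230568529585368211 := tg_mulStep (by norm_num) hD38933_57 (by norm_num)
  have hD38933_59 : 7 ^ 401330490842 % 3999999999999986711 = 1652054488568783104 := tg_sqStep (by norm_num) hD38933_58 (by norm_num)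
  have hD38933_60 : 7 ^ 401330490843 % 3999999999999986711 = 3564381419981508306 := tg_mulStep (by norm_num) hD38933_59 (by norm_num)
  have hD38933_61 : 7 ^ 802660981686 % 3999999999999986711 = 3535816127069757250 := tg_sqStep (by norm_num) hD38933_60 (by norm_num)
  have hD38933_62 : 7 ^ 1605321963372 % 3999999999999986711 = 2810370226708465480 := tg_sqStep (by norm_num) hD38933_61 (by norm_num)
  have hD38933_63 : 7 ^ 3210643926744 % 3999999999999986711 = 2514720203950235386 := tg_sqStep (by norm_num) hD38933_62 (by norm_num)
  have hD38933_64 : 7 ^ 3210643926745 % 3999999999999986711 = 1603041427651700858 := tg_mulStep (by norm_num) hD38933_63 (by norm_num)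
  have hD38933_65 : 7 ^ 6421287853490 % 3999999999999986711 = 1520360141016278581 := tg_sqStep (by norm_num) hD38933_64 (by norm_num)
  have hD38933_66 : 7 ^ 6421287853491 % 3999999999999986711 = 2642520987113976645 := tg_mulStep (by norm_num) hD38933_65 (by norm_num)
  have hD38933_67 : 7 ^ 12842575706982 % 3999999999999986711 = 890247093773366045 := tg_sqStep (by norm_num) hD38933_66 (by norm_num)
  have hD38933_68 : 7 ^ 12842575706983 % 3999999999999986711 = 2231729656413575604 := tg_mulStep (by norm_num) hD38933_67 (by norm_num)
  have hD38933_69 : 7 ^ 25685151413966 % 3999999999999986711 = 3916558990382241726 := tg_sqStep (by norm_num) hD38933_68 (by norm_num)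
  have hD38933_70 : 7 ^ 25685151413967 % 3999999999999986711 = 3415912932675771816 := tg_mulStep (by norm_num) hD38933_69 (by norm_num)
  have hD38933_71 : 7 ^ 51370302827934 % 3999999999999986711 = 712817413262730266 := tg_sqStep (by norm_num) hD38933_70 (by norm_num)
  have hD38933_72 : 7 ^ 51370302827935 % 3999999999999986711 = 989721892839125151 := tg_mulStep (by norm_num) hD38933_71 (by norm_num)
  have hD38933_73 : 7 ^ 102740605655870 % 3999999999999986711 = 3157220157674580356 := tg_sqStep (by norm_num) hD38933_72 (by norm_num)
  have hD895669_1 : 7 ^ 1 % 3999999999999986711 = 7 := by norm_num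
  have hD895669_2 : 7 ^ 2 % 3999999999999986711 = 49 := tg_sqStep (by norm_num) hD895669_1 (by norm_num)
  have hD895669_3 : 7 ^ 4 % 3999999999999986711 = 2401 := tg_sqStep (by norm_num) hD895669_2 (by norm_num)
  have hD895669_4 : 7 ^ 8 % 3999999999999986711 = 5764801 := tg_sqStep (by norm_num) hD895669_3 (by norm_num)
  have hD895669_5 : 7 ^ 16 % 3999999999999986711 = 33232930569601 := tg_sqStep (by norm_num) hD895669_4 (by norm_num)
  have hD895669_6 : 7 ^ 32 % 3999999999999986711 = 2243924315490132503 := tg_sqStep (by norm_num) hD895669_5 (by norm_num)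
  have hD895669_7 : 7 ^ 64 % 3999999999999986711 = 3528270222154521221 := tg_sqStep (by norm_num) hD895669_6 (by norm_num)
  have hD895669_8 : 7 ^ 128 % 3999999999999986711 = 3129518143581166460 := tg_sqStep (by norm_num) hD895669_7 (by norm_num)
  have hD895669_9 : 7 ^ 129 % 3999999999999986711 = 1906627005068231665 := tg_mulStep (by norm_num) hD895669_8 (by norm_num)
  have hD895669_10 : 7 ^ 258 % 3999999999999986711 = 306242949283155502 := tg_sqStep (by norm_num) hD895669_9 (by norm_num)
  have hD895669_11 : 7 ^ 259 % 3999999999999986711 = 2143700644982088514 := tg_mulStep (by norm_num) hD895669_10 (by norm_num)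
  have hD895669_12 : 7 ^ 518 % 3999999999999986711 = 60023490584875195 := tg_sqStep (by norm_num) hD895669_11 (by norm_num)
  have hD895669_13 : 7 ^ 519 % 3999999999999986711 = 420164434094126365 := tg_mulStep (by norm_num) hD895669_12 (by norm_num)
  have hD895669_14 : 7 ^ 1038 % 3999999999999986711 = 262139003621104904 := tg_sqStep (by norm_num) hD895669_13 (by norm_num)
  have hD895669_15 : 7 ^ 1039 % 3999999999999986711 = 1834973025347734328 := tg_mulStep (by norm_num) hD895669_14 (by norm_num)
  have hD895669_16 : 7 ^ 2078 % 3999999999999986711 = 3048289534024790896 := tg_sqStep (by norm_num) hD895669_15 (by norm_num)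
  have hD895669_17 : 7 ^ 2079 % 3999999999999986711 = 1338026738173602717 := tg_mulStep (by norm_num) hD895669_16 (by norm_num)
  have hD895669_18 : 7 ^ 4158 % 3999999999999986711 = 2176875051590839843 := tg_sqStep (by norm_num) hD895669_17 (by norm_num)
  have hD895669_19 : 7 ^ 4159 % 3999999999999986711 = 3238125361135918768 := tg_mulStep (by norm_num) hD895669_18 (by norm_num)
  have hD895669_20 : 7 ^ 8318 % 3999999999999986711 = 3717536793074322001 := tg_sqStep (by norm_num) hD895669_19 (by norm_num)
  have hD895669_21 : 7 ^ 16636 % 3999999999999986711 = 1259431013236927254 := tg_sqStep (by norm_num) hD895669_20 (by norm_num)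
  have hD895669_22 : 7 ^ 33272 % 3999999999999986711 = 1722769683124747141 := tg_sqStep (by norm_num) hD895669_21 (by norm_num)
  have hD895669_23 : 7 ^ 33273 % 3999999999999986711 = 59387781873269854 := tg_mulStep (by norm_num) hD895669_22 (by norm_num)
  have hD895669_24 : 7 ^ 66546 % 3999999999999986711 = 3166380401281724424 := tg_sqStep (by norm_num) hD895669_23 (by norm_num)
  have hD895669_25 : 7 ^ 66547 % 3999999999999986711 = 2164662808972137413 := tg_mulStep (by norm_num) hD895669_24 (by norm_num)
  have hD895669_26 : 7 ^ 133094 % 3999999999999986711 = 600948116556097720 := tg_sqStep (by norm_num) hD895669_25 (by norm_num)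
  have hD895669_27 : 7 ^ 133095 % 3999999999999986711 = 206636815892697329 := tg_mulStep (by norm_num) hD895669_26 (by norm_num)
  have hD895669_28 : 7 ^ 266190 % 3999999999999986711 = 1300043657133985903 := tg_sqStep (by norm_num) hD895669_27 (by norm_num)
  have hD895669_29 : 7 ^ 532380 % 3999999999999986711 = 2642696871048435162 := tg_sqStep (by norm_num) hD895669_28 (by norm_num)
  have hD895669_30 : 7 ^ 532381 % 3999999999999986711 = 2498878097339099290 := tg_mulStep (by norm_num) hD895669_29 (by norm_num)
  have hD895669_31 : 7 ^ 1064762 % 3999999999999986711 = 3523966614385430948 := tg_sqStep (by norm_num) hD895669_30 (by norm_num)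
  have hD895669_32 : 7 ^ 2129524 % 3999999999999986711 = 2489685419592299355 := tg_sqStep (by norm_num) hD895669_31 (by norm_num)
  have hD895669_33 : 7 ^ 4259048 % 3999999999999986711 = 2081910286401286833 := tg_sqStep (by norm_num) hD895669_32 (by norm_num)
  have hD895669_34 : 7 ^ 8518096 % 3999999999999986711 = 2474910959770563138 := tg_sqStep (by norm_num) hD895669_33 (by norm_num)
  have hD895669_35 : 7 ^ 17036192 % 3999999999999986711 = 662430006928994109 := tg_sqStep (by norm_num) hD895669_34 (by norm_num)
  have hD895669_36 : 7 ^ 34072384 % 3999999999999986711 = 1108896514666073121 := tg_sqStep (by norm_num) hD895669_35 (by norm_num)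
  have hD895669_37 : 7 ^ 68144768 % 3999999999999986711 = 1545284013103225280 := tg_sqStep (by norm_num) hD895669_36 (by norm_num)
  have hD895669_38 : 7 ^ 136289536 % 3999999999999986711 = 63235197047964957 := tg_sqStep (by norm_num) hD895669_37 (by norm_num)
  have hD895669_39 : 7 ^ 272579072 % 3999999999999986711 = 1296932031635119287 := tg_sqStep (by norm_num) hD895669_38 (by norm_num)
  have hD895669_40 : 7 ^ 545158144 % 3999999999999986711 = 3168860207348181359 := tg_sqStep (by norm_num) hD895669_39 (by norm_num)
  have hD895669_41 : 7 ^ 1090316288 % 3999999999999986711 = 784607198723858712 := tg_sqStep (by norm_num) hD895669_40 (by norm_num)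
  have hD895669_42 : 7 ^ 2180632576 % 3999999999999986711 = 1269583294074393354 := tg_sqStep (by norm_num) hD895669_41 (by norm_num)
  have hD895669_43 : 7 ^ 2180632577 % 3999999999999986711 = 887083058520780056 := tg_mulStep (by norm_num) hD895669_42 (by norm_num)
  have hD895669_44 : 7 ^ 4361265154 % 3999999999999986711 = 3847847168755067100 := tg_sqStep (by norm_num) hD895669_43 (by norm_num)
  have hD895669_45 : 7 ^ 8722530308 % 3999999999999986711 = 2333818752383641906 := tg_sqStep (by norm_num) hD895669_44 (by norm_num)
  have hD895669_46 : 7 ^ 8722530309 % 3999999999999986711 = 336731266685546498 := tg_mulStep (by norm_num) hD895669_45 (by norm_num)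
  have hD895669_47 : 7 ^ 17445060618 % 3999999999999986711 = 1519890414666283121 := tg_sqStep (by norm_num) hD895669_46 (by norm_num)
  have hD895669_48 : 7 ^ 17445060619 % 3999999999999986711 = 2639232902664008425 := tg_mulStep (by norm_num) hD895669_47 (by norm_num)
  have hD895669_49 : 7 ^ 34890121238 % 3999999999999986711 = 2670838250416565828 := tg_sqStep (by norm_num) hD895669_48 (by norm_num)
  have hD895669_50 : 7 ^ 69780242476 % 3999999999999986711 = 1165774077782904731 := tg_sqStep (by norm_num) hD895669_49 (by norm_num)
  have hD895669_51 : 7 ^ 69780242477 % 3999999999999986711 = 160418544480359695 := tg_mulStep (by norm_num) hD895669_50 (by norm_num)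
  have hD895669_52 : 7 ^ 139560484954 % 3999999999999986711 = 3462258594574970459 := tg_sqStep (by norm_num) hD895669_51 (by norm_num)
  have hD895669_53 : 7 ^ 139560484955 % 3999999999999986711 = 235810162024872947 := tg_mulStep (by norm_num) hD895669_52 (by norm_num)
  have hD895669_54 : 7 ^ 279120969910 % 3999999999999986711 = 62063911783501215 := tg_sqStep (by norm_num) hD895669_53 (by norm_num)
  have hD895669_55 : 7 ^ 279120969911 % 3999999999999986711 = 434447382484508505 := tg_mulStep (by norm_num) hD895669_54 (by norm_num)
  have hD895669_56 : 7 ^ 558241939822 % 3999999999999986711 = 2399224949919148932 := tg_sqStep (by norm_num) hD895669_55 (by norm_num)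
  have hD895669_57 : 7 ^ 558241939823 % 3999999999999986711 = 794574649434095680 := tg_mulStep (by norm_num) hD895669_56 (by norm_num)
  have hD895669_58 : 7 ^ 1116483879646 % 3999999999999986711 = 3824066762238353015 := tg_sqStep (by norm_num) hD895669_57 (by norm_num)
  have hD895669_59 : 7 ^ 1116483879647 % 3999999999999986711 = 2768467335668550839 := tg_mulStep (by norm_num) hD895669_58 (by norm_num)
  have hD895669_60 : 7 ^ 2232967759294 % 3999999999999986711 = 3654384342471054710 := tg_sqStep (by norm_num) hD895669_59 (by norm_num)
  have hD895669_61 : 7 ^ 2232967759295 % 3999999999999986711 = 1580690397297462704 := tg_mulStep (by norm_num) hD895669_60 (by norm_num)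
  have hD895669_62 : 7 ^ 4465935518590 % 3999999999999986711 = 1359879433465310049 := tg_sqStep (by norm_num) hD895669_61 (by norm_num)
  refine lucas_primality 3999999999999986711 ((7:ℕ) : ZMod 3999999999999986711) ?_ ?_
  · rw [show (3999999999999986711 - 1 : ℕ) = 3999999999999986710 from by norm_num, tg_zmodPow hA_95]
    exact Nat.cast_one
  · intro q hq hdvd
    rw [show (3999999999999986711 - 1 : ℕ) = 2 * (5 * (7 * (13 * (233 * (541 * (38933 * 895669)))))) from by norm_num] at hdvd
    rcases (Nat.Prime.dvd_mul hq).mp hdvd with h | hdvd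
    · have heq : q = 2 := (Nat.prime_dvd_prime_iff_eq hq (by norm_num)).mp h
      subst heq
      rw [show ((3999999999999986711 - 1 : ℕ) / 2) = 1999999999999993355 from by norm_num, tg_zmodPow hD2_94]
      exact tg_neq_one (by norm_num) (by norm_num) (by norm_num)
    rcases (Nat.Prime.dvd_mul hq).mp hdvd with h | hdvd
    · have heq : q = 5 := (Nat.prime_dvd_prime_iff_eq hq (by norm_num)).mp h
      subst heq
      rw [show ((3999999999999986711 - 1 : ℕ) / 5) = 799999999999997342 from by norm_num, tg_zmodPow hD5_93]
      exact tg_neq_one (by norm_num) (by norm_num) (by norm_num)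
    rcases (Nat.Prime.dvd_mul hq).mp hdvd with h | hdvd
    · have heq : q = 7 := (Nat.prime_dvd_prime_iff_eq hq (by norm_num)).mp h
      subst heq
      rw [show ((3999999999999986711 - 1 : ℕ) / 7) = 571428571428569530 from by norm_num, tg_zmodPow hD7_86]
      exact tg_neq_one (by norm_num) (by norm_num) (by norm_num)
    rcases (Nat.Prime.dvd_mul hq).mp hdvd with h | hdvd
    · have heq : q = 13 := (Nat.prime_dvd_prime_iff_eq hq (by norm_num)).mp h
      subst heq
      rw [show ((3999999999999986711 - 1 : ℕ) / 13) = 307692307692306670 from by norm_num, tg_zmodPow hD13_81]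
      exact tg_neq_one (by norm_num) (by norm_num) (by norm_num)
    rcases (Nat.Prime.dvd_mul hq).mp hdvd with h | hdvd
    · have heq : q = 233 := (Nat.prime_dvd_prime_iff_eq hq (by norm_num)).mp h
      subst heq
      rw [show ((3999999999999986711 - 1 : ℕ) / 233) = 17167381974248870 from by norm_num, tg_zmodPow hD233_82]
      exact tg_neq_one (by norm_num) (by norm_num) (by norm_num)
    rcases (Nat.Prime.dvd_mul hq).mp hdvd with h | hdvd
    · have heq : q = 541 := (Nat.prime_dvd_prime_iff_eq hq (by norm_num)).mp h
      subst heq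
      rw [show ((3999999999999986711 - 1 : ℕ) / 541) = 7393715341959310 from by norm_num, tg_zmodPow hD541_71]
      exact tg_neq_one (by norm_num) (by norm_num) (by norm_num)
    rcases (Nat.Prime.dvd_mul hq).mp hdvd with h | hdvd
    · have heq : q = 38933 := (Nat.prime_dvd_prime_iff_eq hq (by norm_num)).mp h
      subst heq
      rw [show ((3999999999999986711 - 1 : ℕ) / 38933) = 102740605655870 from by norm_num, tg_zmodPow hD38933_73]
      exact tg_neq_one (by norm_num) (by norm_num) (by norm_num)
    have h := hdvd
    have heq : q = 895669 := (Nat.prime_dvd_prime_iff_eq hq (by norm_num)).mp h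
    subst heq
    rw [show ((3999999999999986711 - 1 : ℕ) / 895669) = 4465935518590 from by norm_num, tg_zmodPow hD895669_62]
    exact tg_neq_one (by norm_num) (by norm_num) (by norm_num)

theorem tg_smallPrime : Nat.Prime 13291 := by norm_num

/-- Main theorem skeleton: binary Goldbach verified up to `4·10^18` together with a
prime ladder of rung width at most `4·10^18` reaching past `T - 4·10^18` yields
ternary Goldbach for all odd `7 ≤ n ≤ T`, `T = 8875694145621773516800000000000`. -/
theorem ternary_goldbach_up_to_T
    (hbin : ∀ m : ℕ, 4 ≤ m → m ≤ 4 * 10 ^ 18 → Even m →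
      ∃ p q : ℕ, p.Prime ∧ q.Prime ∧ p + q = m)
    (m : ℕ) (hm : 1 ≤ m) (p : ℕ → ℕ)
    (hprime : ∀ i, i < m → (p i).Prime)
    (hmono : ∀ i, i + 1 < m → p i < p (i + 1))
    (hgap : ∀ i, i + 1 < m → p (i + 1) - p i ≤ 4 * 10 ^ 18)
    (hfirst : p 0 ≤ 4 * 10 ^ 18)
    (hlast : p (m - 1) ≥ 8875694145621773516800000000000 - 4 * 10 ^ 18) :
    ∀ n : ℕ, 7 ≤ n → n ≤ 8875694145621773516800000000000 → Odd n →
      ∃ a b c : ℕ, a.Prime ∧ b.Prime ∧ c.Prime ∧ a + b + c = n := by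
  intro n h7 hT hodd
  obtain ⟨k, hk⟩ := hodd
  by_cases hsmall : n ≤ 4 * 10 ^ 18 + 3
  · -- use c = 3
    obtain ⟨a, b, ha, hb, hab⟩ := hbin (n - 3) (by omega) (by omega) ⟨k - 1, by omega⟩
    exact ⟨a, b, 3, ha, hb, by norm_num, by omega⟩
  by_cases h5 : n = 4 * 10 ^ 18 + 5
  · -- use c = 5
    obtain ⟨a, b, ha, hb, hab⟩ := hbin (4 * 10 ^ 18) (by norm_num) le_rfl ⟨2 * 10 ^ 18, by ring⟩
    exact ⟨a, b, 5, ha, hb, by norm_num, by omega⟩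
  -- now n ≥ 4 * 10 ^ 18 + 7
  have hn7 : 4 * 10 ^ 18 + 7 ≤ n := by omega
  set P : ℕ → Prop := fun i => p i ≤ n - 4 with hP
  have hP0 : P 0 := by simp only [hP]; omega
  set i := Nat.findGreatest P (m - 1) with hidef
  have hile : i ≤ m - 1 := Nat.findGreatest_le _
  have hPi : P i := Nat.findGreatest_spec (Nat.zero_le _) hP0
  have him : i < m := by omega
  have hip : (p i).Prime := hprime i him
  have hpin : p i ≤ n - 4 := hPi
  by_cases hlastc : i = m - 1
  · -- top rung
    have hbig : p i ≥ 8875694145621773516800000000000 - 4 * 10 ^ 18 := by rw [hlastc]; exact hlast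
    have hodd' : Odd (p i) := hip.odd_of_ne_two (by omega)
    obtain ⟨j, hj⟩ := Nat.Odd.sub_odd ⟨k, hk⟩ hodd'
    obtain ⟨a, b, ha, hb, hab⟩ := hbin (n - p i) (by omega) (by omega) ⟨j, hj⟩
    exact ⟨a, b, p i, ha, hb, hip, by omega⟩
  · have hi1m : i + 1 < m := by omega
    have hnotP : ¬ P (i + 1) :=
      Nat.findGreatest_is_greatest (P := P) (n := m - 1) (k := i + 1) (by omega) (by omega)
    have hp1 : n - 4 < p (i + 1) := by
      simpa only [hP, not_le] using hnotP
    have hg : p (i + 1) - p i ≤ 4 * 10 ^ 18 := hgap i hi1m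
    have hmo : p i < p (i + 1) := hmono i hi1m
    have hlow : n - 3 - 4 * 10 ^ 18 ≤ p i := by clear_value i; clear * - hp1 hg hn7; omega
    have hodd' : Odd (p i) := hip.odd_of_ne_two (by omega)
    obtain ⟨j, hj⟩ := Nat.Odd.sub_odd ⟨k, hk⟩ hodd'
    by_cases hinw : n - p i ≤ 4 * 10 ^ 18
    · obtain ⟨a, b, ha, hb, hab⟩ := hbin (n - p i) (by omega) hinw ⟨j, hj⟩
      exact ⟨a, b, p i, ha, hb, hip, by omega⟩
    · -- the exceptional gap: n - p i = 4 * 10 ^ 18 + 2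
      have hx : n - p i = 4 * 10 ^ 18 + 2 := by omega
      exact ⟨p i, 13291, 3999999999999986711, hip, tg_smallPrime, tg_bigPrime, by omega⟩
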